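/- arXiv:math/0112241 — 2 statements merged into one kernel-verified Lean document; each statement's English description precedes it below -/
import Mathlib

section
/- If φ avoids Ω₁, then the first cohomology of F_φ with coefficients in the adjoint module has dimension p−1; that is, the quotient of the space of derivations of F_φ by the subspace of inner derivations (derivations of the form y ↦ [x,y] for x ∈ F_φ) has dimension p−1. -/
open scoped BigOperators

noncomputable section

/-- The underlying space ℂ^{2p} of the Lie algebra `F_φ`. -/
abbrev V (p : ℕ) : Type := Fin (2*p) → ℂ

/-- The space of bilinear maps ℂ^{2p} × ℂ^{2p} → ℂ^{2p}. -/
abbrev Bil (p : ℕ) : Type := V p →ₗ[ℂ] V p →ₗ[ℂ] V p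

/-- The basis vector `X j` (1-indexed, j = 1, …, 2p). -/
def X (p j : ℕ) : V p := fun i => if (i : ℕ) + 1 = j then 1 else 0

/-- The coordinate functional dual to `X j` (1-indexed). -/
def coordL (p j : ℕ) : V p →ₗ[ℂ] ℂ :=
  if h : j - 1 < 2*p then LinearMap.proj (⟨j - 1, h⟩ : Fin (2*p)) else 0

/-- The elementary alternating bilinear map `(x,y) ↦ (x_a y_b − x_b y_a) • v`
(indices 1-based). -/
def elem (p a b : ℕ) (v : V p) : Bil p :=
  (coordL p a).smulRight ((coordL p b).smulRight v)
    - (coordL p b).smulRight ((coordL p a).smulRight v)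

/-- The Lie bracket of the frobeniusian model algebra `F_φ`:
`[X_1,X_2] = −X_1`, `[X_{2k+1},X_{2k+2}] = −X_1`, `[X_2,X_{2k+1}] = −φ_k X_{2k+1}`,
`[X_2,X_{2k+2}] = (1+φ_k) X_{2k+2}` for `1 ≤ k ≤ p−1`. -/
def mu (p : ℕ) (φ : ℕ → ℂ) : Bil p :=
  elem p 1 2 (-(X p 1)) +
    ∑ k ∈ Finset.Icc 1 (p-1),
      (elem p (2*k+1) (2*k+2) (-(X p 1)) + elem p 2 (2*k+1) (-(φ k) • X p (2*k+1))
        + elem p 2 (2*k+2) ((1 + φ k) • X p (2*k+2)))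

/-- `φ` avoids the set `Ω₁`. -/
def AvoidsOmega1 (p : ℕ) (φ : ℕ → ℂ) : Prop :=
  ∀ i j : ℕ, 1 ≤ i → i ≤ p - 1 → 1 ≤ j → j ≤ p - 1 →
    1 + φ i + φ j ≠ 0 ∧ 2 + φ i + φ j ≠ 0 ∧ (i ≠ j → φ i ≠ φ j) ∧
      φ i ≠ 0 ∧ φ i ≠ -1 ∧ 2 * φ i + 1 ≠ 0

/-- `φ` avoids the set `Ω = Ω₁ ∪ Ω₂`. -/
def AvoidsOmega (p : ℕ) (φ : ℕ → ℂ) : Prop :=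
  AvoidsOmega1 p φ ∧
    ∀ i j : ℕ, 1 ≤ i → i ≤ p - 1 → 1 ≤ j → j ≤ p - 1 →
      (i ≠ j → 1 + φ i - φ j ≠ 0) ∧ φ i + φ j ≠ 0 ∧ 2 + φ i ≠ 0 ∧ 1 - φ i ≠ 0 ∧
        1 + 2*φ i - φ j ≠ 0 ∧ 1 + 2*φ i + φ j ≠ 0 ∧ 2*φ i - φ j ≠ 0 ∧ 2 + 2*φ i + φ j ≠ 0

/-- The space of derivations of a bilinear bracket `B` on `ℂ^{2p}`. -/
def derSub (p : ℕ) (B : Bil p) : Submodule ℂ (V p →ₗ[ℂ] V p) where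
  carrier := {D | ∀ x y, D (B x y) = B (D x) y + B x (D y)}
  add_mem' := by
    intro D E hD hE x y
    simp only [LinearMap.add_apply, hD x y, hE x y, map_add, LinearMap.add_apply]
    abel
  zero_mem' := by intro x y; simp
  smul_mem' := by
    intro c D hD x y
    simp only [LinearMap.smul_apply, hD x y, map_smul, LinearMap.map_smul₂,
      LinearMap.smul_apply, smul_add]

/-- The grading subspaces: `g_0 = ℂ X_2`, `g_1 = ⟨X_3,…,X_{2p}⟩`, `g_2 = ℂ X_1`,
and `g_m = 0` otherwise. -/
def gr (p : ℕ) : ℤ → Submodule ℂ (V p) := fun m =>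
  if m = 0 then Submodule.span ℂ {X p 2}
  else if m = 1 then Submodule.span ℂ {v | ∃ j, 3 ≤ j ∧ j ≤ 2*p ∧ v = X p j}
  else if m = 2 then Submodule.span ℂ {X p 1}
  else ⊥

/-- The space of 2-cocycles of `F_φ` with coefficients in the adjoint module
(2-cochains are alternating bilinear maps). -/
def Z2 (p : ℕ) (φ : ℕ → ℂ) : Submodule ℂ (Bil p) where
  carrier := {ψ | (∀ x, ψ x x = 0) ∧
    ∀ x y z, mu p φ x (ψ y z) - mu p φ y (ψ x z) + mu p φ z (ψ x y)
      - ψ (mu p φ x y) z + ψ (mu p φ x z) y - ψ (mu p φ y z) x = 0}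
  add_mem' := by
    rintro ψ₁ ψ₂ ⟨h₁a, h₁c⟩ ⟨h₂a, h₂c⟩
    constructor
    · intro x; simp [h₁a x, h₂a x]
    · intro x y z
      have e₁ := h₁c x y z
      have e₂ := h₂c x y z
      simp only [LinearMap.add_apply, map_add]
      rw [← sub_eq_zero] at *
      simp only [sub_zero] at *
      linear_combination (norm := module) e₁ + e₂
  zero_mem' := by
    constructor
    · intro x; simp
    · intro x y z; simp
  smul_mem' := by
    rintro c ψ ⟨ha, hc⟩
    constructor
    · intro x; simp [ha x]
    · intro x y z
      have e := hc x y z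
      simp only [LinearMap.smul_apply, map_smul]
      linear_combination (norm := module) c • e

/-- The space of 2-coboundaries of `F_φ` with coefficients in the adjoint module. -/
def B2 (p : ℕ) (φ : ℕ → ℂ) : Submodule ℂ (Bil p) where
  carrier := {ψ | ∃ f : V p →ₗ[ℂ] V p,
    ∀ x y, ψ x y = mu p φ x (f y) - mu p φ y (f x) - f (mu p φ x y)}
  add_mem' := by
    rintro ψ₁ ψ₂ ⟨f₁, h₁⟩ ⟨f₂, h₂⟩
    refine ⟨f₁ + f₂, fun x y => ?_⟩
    simp only [LinearMap.add_apply, h₁ x y, h₂ x y, map_add]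
    abel
  zero_mem' := ⟨0, by intro x y; simp⟩
  smul_mem' := by
    rintro c ψ ⟨f, h⟩
    refine ⟨c • f, fun x y => ?_⟩
    simp only [LinearMap.smul_apply, h x y, map_smul, smul_sub]

/-- The 2-cochains of degree `k` with respect to the grading `gr`. -/
def degSub (p : ℕ) (k : ℤ) : Submodule ℂ (Bil p) where
  carrier := {ψ | ∀ (a b : ℤ), ∀ x ∈ gr p a, ∀ y ∈ gr p b, ψ x y ∈ gr p (a + b + k)}
  add_mem' := by
    intro ψ₁ ψ₂ h₁ h₂ a b x hx y hy
    simpa using Submodule.add_mem _ (h₁ a b x hx y hy) (h₂ a b x hx y hy)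
  zero_mem' := by intro a b x hx y hy; simp
  smul_mem' := by
    intro c ψ h a b x hx y hy
    simpa using Submodule.smul_mem _ c (h a b x hx y hy)

attribute [local instance 100] LieRing.ofAssociativeRing

/-- The derivations of `F_φ` as a Lie subalgebra of `End(ℂ^{2p})`. -/
def derLie (p : ℕ) (φ : ℕ → ℂ) : LieSubalgebra ℂ (Module.End ℂ (V p)) :=
  { derSub p (mu p φ) with
    lie_mem' := by
      intro D E hD hE
      have hD' : ∀ x y, D (mu p φ x y) = mu p φ (D x) y + mu p φ x (D y) := hD
      have hE' : ∀ x y, E (mu p φ x y) = mu p φ (E x) y + mu p φ x (E y) := hE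
      intro x y
      simp only [Ring.lie_def, LinearMap.sub_apply, Module.End.mul_apply]
      rw [hE' x y, hD' x y, map_add, map_add, hD' (E x) y, hD' x (E y),
        hE' (D x) y, hE' x (D y)]
      simp only [map_sub, LinearMap.sub_apply]
      abel }

/-- The derivation `f_i` of `F_φ` : `f_i(X_{2i+1}) = X_{2i+1}`, `f_i(X_{2i+2}) = −X_{2i+2}`. -/
def fDer (p i : ℕ) : V p →ₗ[ℂ] V p :=
  (coordL p (2*i+1)).smulRight (X p (2*i+1)) - (coordL p (2*i+2)).smulRight (X p (2*i+2))

/-- The 2-cocycle `ψ_k = ψ^{2k+1}_{2,2k+1}` :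
`(X_2,X_{2k+1}) ↦ X_{2k+1}`, `(X_2,X_{2k+2}) ↦ −X_{2k+2}`. -/
def psiK (p k : ℕ) : Bil p :=
  elem p 2 (2*k+1) (X p (2*k+1)) - elem p 2 (2*k+2) (X p (2*k+2))

/-- The 2-cocycle `ψ^2_{12}` spanning `Z²_{−2}`. -/
def psiM2 (p : ℕ) (φ : ℕ → ℂ) : Bil p :=
  elem p 1 2 (X p 2) +
    ∑ k ∈ Finset.Icc 1 (p-1),
      (elem p (2*k+1) (2*k+2) (X p 2) + elem p 1 (2*k+1) (-(φ k) • X p (2*k+1))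
        + elem p 1 (2*k+2) ((1 + φ k) • X p (2*k+2)))

/-- The 2-cocycle `ψ^1_{2,j}` : `(X_2,X_j) ↦ X_1`. -/
def psiTop (p j : ℕ) : Bil p := elem p 2 j (X p 1)


/-! ### Plain-function versions of the relevant spaces.
We realise spaces of (multi)linear maps as submodules of plain function spaces,
the (bi)linearity being part of the defining conditions. -/

/-- `ψ : ℂ^{2p} × ℂ^{2p} → ℂ^{2p}` is bilinear. -/
def IsBil (p : ℕ) (ψ : V p → V p → V p) : Prop :=
  (∀ x x' y, ψ (x + x') y = ψ x y + ψ x' y) ∧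
  (∀ (c : ℂ) (x y), ψ (c • x) y = c • ψ x y) ∧
  (∀ x y y', ψ x (y + y') = ψ x y + ψ x y') ∧
  (∀ (c : ℂ) (x y), ψ x (c • y) = c • ψ x y)

/-- The space of derivations of a bilinear bracket `B` on `ℂ^{2p}`, realised inside
the space of all maps `ℂ^{2p} → ℂ^{2p}` (linearity is part of the conditions). -/
def derF (p : ℕ) (B : Bil p) : Submodule ℂ (V p → V p) where
  carrier := {D | (∀ x y, D (x + y) = D x + D y) ∧ (∀ (c : ℂ) (x), D (c • x) = c • D x) ∧
    ∀ x y, D (B x y) = B (D x) y + B x (D y)}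
  add_mem' := by
    rintro D E ⟨hDa, hDs, hDd⟩ ⟨hEa, hEs, hEd⟩
    refine ⟨fun x y => ?_, fun c x => ?_, fun x y => ?_⟩
    · simp only [Pi.add_apply, hDa, hEa]; abel
    · simp only [Pi.add_apply, hDs, hEs, smul_add]
    · simp only [Pi.add_apply, hDd x y, hEd x y, map_add, LinearMap.add_apply]; abel
  zero_mem' := by
    refine ⟨fun x y => ?_, fun c x => ?_, fun x y => ?_⟩ <;> simp
  smul_mem' := by
    rintro c D ⟨hDa, hDs, hDd⟩
    refine ⟨fun x y => ?_, fun c' x => ?_, fun x y => ?_⟩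
    · simp only [Pi.smul_apply, hDa, smul_add]
    · simp only [Pi.smul_apply, hDs, smul_comm c c']
    · simp only [Pi.smul_apply, hDd x y, map_smul, LinearMap.smul_apply, smul_add]

/-- The space of inner derivations `ad(v) = B(v,·)` of a bilinear bracket `B`. -/
def innerF (p : ℕ) (B : Bil p) : Submodule ℂ (V p → V p) where
  carrier := {D | ∃ v, D = fun y => B v y}
  add_mem' := by
    rintro D E ⟨v, rfl⟩ ⟨w, rfl⟩
    exact ⟨v + w, by funext y; simp [map_add]⟩
  zero_mem' := ⟨0, by funext y; simp⟩
  smul_mem' := by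
    rintro c D ⟨v, rfl⟩
    exact ⟨c • v, by funext y; simp [map_smul]⟩

/-- The space of 2-cocycles of `F_φ` with coefficients in the adjoint module;
2-cochains are alternating bilinear maps `ℂ^{2p} × ℂ^{2p} → ℂ^{2p}`. -/
def Z2F (p : ℕ) (φ : ℕ → ℂ) : Submodule ℂ (V p → V p → V p) where
  carrier := {ψ | IsBil p ψ ∧ (∀ x, ψ x x = 0) ∧
    ∀ x y z, mu p φ x (ψ y z) - mu p φ y (ψ x z) + mu p φ z (ψ x y)
      - ψ (mu p φ x y) z + ψ (mu p φ x z) y - ψ (mu p φ y z) x = 0}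
  add_mem' := by
    rintro ψ₁ ψ₂ ⟨⟨hb₁, hb₂, hb₃, hb₄⟩, ha, hc⟩ ⟨⟨hb₁', hb₂', hb₃', hb₄'⟩, ha', hc'⟩
    refine ⟨⟨fun x x' y => ?_, fun c x y => ?_, fun x y y' => ?_, fun c x y => ?_⟩,
      fun x => ?_, fun x y z => ?_⟩
    · simp only [Pi.add_apply, hb₁, hb₁']; abel
    · simp only [Pi.add_apply, hb₂, hb₂', smul_add]
    · simp only [Pi.add_apply, hb₃, hb₃']; abel
    · simp only [Pi.add_apply, hb₄, hb₄', smul_add]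
    · simp only [Pi.add_apply, ha x, ha' x]; abel
    · have e := hc x y z
      have e' := hc' x y z
      simp only [Pi.add_apply, map_add]
      linear_combination (norm := module) e + e'
  zero_mem' := by
    refine ⟨⟨fun x x' y => ?_, fun c x y => ?_, fun x y y' => ?_, fun c x y => ?_⟩,
      fun x => ?_, fun x y z => ?_⟩ <;> simp
  smul_mem' := by
    rintro c ψ ⟨⟨hb₁, hb₂, hb₃, hb₄⟩, ha, hc⟩
    refine ⟨⟨fun x x' y => ?_, fun c' x y => ?_, fun x y y' => ?_, fun c' x y => ?_⟩,
      fun x => ?_, fun x y z => ?_⟩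
    · simp only [Pi.smul_apply, hb₁, smul_add]
    · simp only [Pi.smul_apply, hb₂, smul_comm c c']
    · simp only [Pi.smul_apply, hb₃, smul_add]
    · simp only [Pi.smul_apply, hb₄, smul_comm c c']
    · simp only [Pi.smul_apply, ha x, smul_zero]
    · have e := hc x y z
      simp only [Pi.smul_apply, map_smul]
      linear_combination (norm := module) c • e

/-- The space of 2-coboundaries of `F_φ` with coefficients in the adjoint module. -/
def B2F (p : ℕ) (φ : ℕ → ℂ) : Submodule ℂ (V p → V p → V p) where
  carrier := {ψ | ∃ f : V p →ₗ[ℂ] V p,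
    ∀ x y, ψ x y = mu p φ x (f y) - mu p φ y (f x) - f (mu p φ x y)}
  add_mem' := by
    rintro ψ₁ ψ₂ ⟨f₁, h₁⟩ ⟨f₂, h₂⟩
    refine ⟨f₁ + f₂, fun x y => ?_⟩
    simp only [Pi.add_apply, h₁ x y, h₂ x y, map_add, LinearMap.add_apply]
    abel
  zero_mem' := ⟨0, by intro x y; simp⟩
  smul_mem' := by
    rintro c ψ ⟨f, h⟩
    refine ⟨c • f, fun x y => ?_⟩
    simp only [Pi.smul_apply, h x y, map_smul, LinearMap.smul_apply, smul_sub]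

/-- The 2-cochains of degree `k` with respect to the grading `gr`. -/
def degF (p : ℕ) (k : ℤ) : Submodule ℂ (V p → V p → V p) where
  carrier := {ψ | ∀ (a b : ℤ), ∀ x ∈ gr p a, ∀ y ∈ gr p b, ψ x y ∈ gr p (a + b + k)}
  add_mem' := by
    intro ψ₁ ψ₂ h₁ h₂ a b x hx y hy
    simpa using Submodule.add_mem _ (h₁ a b x hx y hy) (h₂ a b x hx y hy)
  zero_mem' := by intro a b x hx y hy; simp
  smul_mem' := by
    intro c ψ h a b x hx y hy
    simpa using Submodule.smul_mem _ c (h a b x hx y hy)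

/-- A bilinear map, viewed as a plain function. -/
def toF (p : ℕ) (B : Bil p) : V p → V p → V p := fun x y => B x y

section Aux
variable {p : ℕ} {φ : ℕ → ℂ}

def ent (p : ℕ) (x : V p) (k : ℕ) : ℂ := if h : k < 2*p then x ⟨k, h⟩ else 0

lemma ent_val (x : V p) (i : Fin (2*p)) : ent p x (i : ℕ) = x i := by
  simp [ent, i.isLt]

lemma ent_add (x y : V p) (k : ℕ) : ent p (x + y) k = ent p x k + ent p y k := by
  unfold ent; split <;> simp

lemma ent_smul (c : ℂ) (x : V p) (k : ℕ) : ent p (c • x) k = c * ent p x k := by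
  unfold ent; split <;> simp

lemma coordL_eq (j : ℕ) (x : V p) : coordL p j x = ent p x (j-1) := by
  unfold coordL ent
  split <;> simp

lemma ent_X (j m : ℕ) : ent p (X p j) m = if m + 1 = j ∧ m < 2*p then 1 else 0 := by
  unfold ent X
  split
  · rename_i h; by_cases h2 : m + 1 = j <;> simp [h, h2]
  · rename_i h; simp only [if_neg (by omega : ¬(m + 1 = j ∧ m < 2*p))]

lemma elem_apply (a b : ℕ) (v x y : V p) :
    elem p a b v x y = (ent p x (a-1) * ent p y (b-1) - ent p x (b-1) * ent p y (a-1)) • v := by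
  simp [elem, coordL_eq, sub_smul, smul_smul]

end Aux

section Aux2
variable {p : ℕ} {φ : ℕ → ℂ}

private lemma idx1 : ∀ n : ℕ, 2*n+1-1 = 2*n := fun _ => rfl
private lemma idx2 : ∀ n : ℕ, 2*n+2-1 = 2*n+1 := fun n => by omega

lemma mu_apply (x y : V p) (i : Fin (2*p)) :
    mu p φ x y i =
      if (i : ℕ) = 0 then
        (ent p x 1 * ent p y 0 - ent p x 0 * ent p y 1)
          - ∑ k ∈ Finset.Icc 1 (p-1),
              (ent p x (2*k) * ent p y (2*k+1) - ent p x (2*k+1) * ent p y (2*k))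
      else if (i : ℕ) = 1 then 0
      else if (i : ℕ) % 2 = 0 then
        -φ ((i:ℕ)/2) * (ent p x 1 * ent p y (i:ℕ) - ent p x (i:ℕ) * ent p y 1)
      else (1 + φ ((i:ℕ)/2)) * (ent p x 1 * ent p y (i:ℕ) - ent p x (i:ℕ) * ent p y 1) := by
  have hi2p := i.isLt
  unfold mu
  simp only [LinearMap.add_apply, LinearMap.sum_apply, elem_apply, Pi.add_apply,
    Finset.sum_apply, Pi.smul_apply, Pi.neg_apply, smul_eq_mul, X, mul_ite, mul_one, mul_zero,
    mul_neg, idx1, idx2, show (1:ℕ)-1 = 0 from rfl, show (2:ℕ)-1 = 1 from rfl]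
  by_cases h0 : (i:ℕ) = 0
  · have hsum : ∑ k ∈ Finset.Icc 1 (p-1),
        ((-if (i:ℕ) + 1 = 1 then ent p x (2*k) * ent p y (2*k+1) - ent p x (2*k+1) * ent p y (2*k) else 0) +
          (if (i:ℕ) + 1 = 2*k+1 then -((ent p x 1 * ent p y (2*k) - ent p x (2*k) * ent p y 1) * φ k) else 0) +
          if (i:ℕ) + 1 = 2*k+2 then (ent p x 1 * ent p y (2*k+1) - ent p x (2*k+1) * ent p y 1) * (1+φ k) else 0)
        = ∑ k ∈ Finset.Icc 1 (p-1), -(ent p x (2*k) * ent p y (2*k+1) - ent p x (2*k+1) * ent p y (2*k)) :=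
    Finset.sum_congr rfl fun k hk => by
      simp only [Finset.mem_Icc] at hk
      rw [if_pos (by omega : (i:ℕ)+1 = 1), if_neg (by omega), if_neg (by omega)]; ring
    rw [if_pos h0, hsum, Finset.sum_neg_distrib, if_pos (by omega : (i:ℕ) + 1 = 1)]
    ring
  · by_cases h1 : (i:ℕ) = 1
    · rw [if_neg h0, if_pos h1,
        Finset.sum_eq_zero (fun k hk => by
          simp only [Finset.mem_Icc] at hk
          rw [if_neg (by omega), if_neg (by omega), if_neg (by omega)]
          ring)]
      simp only [eq_false (show ¬((i:ℕ)+1 = 1) from by omega), if_false]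
      ring
    · rw [if_neg h0, if_neg h1]
      have hm : (i:ℕ)/2 ∈ Finset.Icc 1 (p-1) := by
        simp only [Finset.mem_Icc]; omega
      rw [Finset.sum_eq_single ((i:ℕ)/2) (fun k hk hne => by
          simp only [Finset.mem_Icc] at hk
          rw [if_neg (by omega), if_neg (by omega), if_neg (by omega)]
          ring)
        (fun hn => absurd hm hn)]
      by_cases he : (i:ℕ) % 2 = 0
      · simp only [eq_false (show ¬((i:ℕ)+1 = 1) from by omega), if_false,
          eq_true (show (i:ℕ)+1 = 2*((i:ℕ)/2)+1 from by omega), if_true,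
          eq_false (show ¬((i:ℕ)+1 = 2*((i:ℕ)/2)+2) from by omega),
          show 2*((i:ℕ)/2) = (i:ℕ) from by omega, if_pos he]
        rw [if_neg (by omega)]
        ring
      · simp only [eq_false (show ¬((i:ℕ)+1 = 1) from by omega), if_false,
          eq_false (show ¬((i:ℕ)+1 = 2*((i:ℕ)/2)+1) from by omega),
          eq_true (show (i:ℕ)+1 = 2*((i:ℕ)/2)+2 from by omega), if_true,
          show 2*((i:ℕ)/2)+1 = (i:ℕ) from by omega, if_neg he]
        rw [if_neg (by omega)]
        ring

end Aux2

section Aux3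
variable {p : ℕ} {φ : ℕ → ℂ}

set_option maxHeartbeats 1000000 in
lemma mbb1 (hp : 2 ≤ p) : mu p φ (X p 1) (X p 2) = -(X p 1) := by
  funext i
  have hi2p := i.isLt
  rw [mu_apply]
  simp only [ent_X, X, Pi.neg_apply, true_and, and_true]
  by_cases h0 : (i:ℕ) = 0
  · rw [if_pos h0, Finset.sum_eq_zero (fun l hl => by
      simp only [Finset.mem_Icc] at hl
      split_ifs <;> first | ring1 | (exfalso; omega))]
    split_ifs <;> first | ring1 | (exfalso; omega)
  · by_cases h1 : (i:ℕ) = 1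
    · rw [if_neg h0, if_pos h1]; split_ifs <;> first | ring1 | (exfalso; omega)
    · rw [if_neg h0, if_neg h1]
      by_cases he : (i:ℕ) % 2 = 0 <;> [rw [if_pos he]; rw [if_neg he]] <;>
        split_ifs <;> first | ring1 | (exfalso; omega)

set_option maxHeartbeats 1000000 in
lemma mbb2 (hp : 2 ≤ p) {k : ℕ} (hk1 : 1 ≤ k) (hk2 : k ≤ p - 1) :
    mu p φ (X p 2) (X p (2*k+1)) = (-(φ k)) • X p (2*k+1) := by
  funext i
  have hi2p := i.isLt
  rw [mu_apply]
  simp only [ent_X, X, Pi.smul_apply, smul_eq_mul, true_and, and_true]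
  by_cases h0 : (i:ℕ) = 0
  · rw [if_pos h0, Finset.sum_eq_zero (fun l hl => by
      simp only [Finset.mem_Icc] at hl
      split_ifs <;> first | ring1 | (exfalso; omega))]
    split_ifs <;> first | ring1 | (exfalso; omega)
  · by_cases h1 : (i:ℕ) = 1
    · rw [if_neg h0, if_pos h1]; split_ifs <;> first | ring1 | (exfalso; omega)
    · rw [if_neg h0, if_neg h1]
      by_cases he : (i:ℕ) % 2 = 0
      · rw [if_pos he]
        by_cases hik : (i:ℕ) = 2*k
        · rw [show (i:ℕ)/2 = k from by omega]
          split_ifs <;> first | ring1 | (exfalso; omega)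
        · split_ifs <;> first | ring1 | (exfalso; omega)
      · rw [if_neg he]
        split_ifs <;> first | ring1 | (exfalso; omega)

set_option maxHeartbeats 1000000 in
lemma mbb3 (hp : 2 ≤ p) {k : ℕ} (hk1 : 1 ≤ k) (hk2 : k ≤ p - 1) :
    mu p φ (X p 2) (X p (2*k+2)) = (1 + φ k) • X p (2*k+2) := by
  funext i
  have hi2p := i.isLt
  rw [mu_apply]
  simp only [ent_X, X, Pi.smul_apply, smul_eq_mul, true_and, and_true]
  by_cases h0 : (i:ℕ) = 0
  · rw [if_pos h0, Finset.sum_eq_zero (fun l hl => by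
      simp only [Finset.mem_Icc] at hl
      split_ifs <;> first | ring1 | (exfalso; omega))]
    split_ifs <;> first | ring1 | (exfalso; omega)
  · by_cases h1 : (i:ℕ) = 1
    · rw [if_neg h0, if_pos h1]; split_ifs <;> first | ring1 | (exfalso; omega)
    · rw [if_neg h0, if_neg h1]
      by_cases he : (i:ℕ) % 2 = 0
      · rw [if_pos he]
        split_ifs <;> first | ring1 | (exfalso; omega)
      · rw [if_neg he]
        by_cases hik : (i:ℕ) = 2*k+1
        · rw [show (i:ℕ)/2 = k from by omega]
          split_ifs <;> first | ring1 | (exfalso; omega)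
        · split_ifs <;> first | ring1 | (exfalso; omega)

set_option maxHeartbeats 1000000 in
lemma mbb4 (hp : 2 ≤ p) {k : ℕ} (hk1 : 1 ≤ k) (hk2 : k ≤ p - 1) :
    mu p φ (X p (2*k+1)) (X p (2*k+2)) = -(X p 1) := by
  funext i
  have hi2p := i.isLt
  rw [mu_apply]
  simp only [ent_X, X, Pi.neg_apply, true_and, and_true]
  by_cases h0 : (i:ℕ) = 0
  · rw [if_pos h0, Finset.sum_eq_single k (fun l hl hne => by
      simp only [Finset.mem_Icc] at hl
      split_ifs <;> first | ring1 | (exfalso; omega))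
      (fun hn => absurd (by simp only [Finset.mem_Icc]; omega) hn)]
    split_ifs <;> first | ring1 | (exfalso; omega)
  · by_cases h1 : (i:ℕ) = 1
    · rw [if_neg h0, if_pos h1]; split_ifs <;> first | ring1 | (exfalso; omega)
    · rw [if_neg h0, if_neg h1]
      by_cases he : (i:ℕ) % 2 = 0 <;> [rw [if_pos he]; rw [if_neg he]] <;>
        split_ifs <;> first | ring1 | (exfalso; omega)

end Aux3

section Aux4
variable {p : ℕ} {φ : ℕ → ℂ}

lemma ent_lt {m : ℕ} (hm : m < 2*p) (v : V p) : ent p v m = v ⟨m, hm⟩ := dif_pos hm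

lemma extA (hp : 2 ≤ p) (hΩ : AvoidsOmega1 p φ) {D : V p → V p}
    (hD : D ∈ derF p (mu p φ)) {m : ℕ} (hm : m < 2*p) (h0 : m ≠ 0) :
    ent p (D (X p 1)) m = 0 := by
  obtain ⟨hadd, hsmul, hleib⟩ := hD
  have hDneg : ∀ v, D (-v) = -(D v) := fun v => by
    rw [← neg_one_smul ℂ v, hsmul, neg_one_smul]
  have eqn := hleib (X p 1) (X p 2)
  rw [mbb1 hp, hDneg] at eqn
  have e := congrFun eqn ⟨m, hm⟩
  rw [Pi.neg_apply, Pi.add_apply, mu_apply, mu_apply, ← ent_lt hm (D (X p 1))] at e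
  simp only [ent_X, ent_val, Fin.val_mk, true_and, and_true] at e
  by_cases h1 : m = 1
  · subst h1
    norm_num at e
    linear_combination e
  · simp only [eq_false h0, eq_false h1, if_false] at e
    by_cases he : m % 2 = 0
    · simp only [eq_true he, if_true] at e
      try (split_ifs at e) <;> try (exfalso; omega)
      have := hΩ (m/2) (m/2) (by omega) (by omega) (by omega) (by omega)
      have h1φ : 1 + φ (m/2) ≠ 0 := fun hc => this.2.2.2.2.1 (by linear_combination hc)
      have hz : (1 + φ (m/2)) * ent p (D (X p 1)) m = 0 := by linear_combination -e
      rcases mul_eq_zero.mp hz with h | h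
      · exact absurd h h1φ
      · exact h
    · simp only [eq_false he, if_false] at e
      try (split_ifs at e) <;> try (exfalso; omega)
      have := hΩ (m/2) (m/2) (by omega) (by omega) (by omega) (by omega)
      have hφ0 : φ (m/2) ≠ 0 := this.2.2.2.1
      have hz : φ (m/2) * ent p (D (X p 1)) m = 0 := by linear_combination e
      rcases mul_eq_zero.mp hz with h | h
      · exact absurd h hφ0
      · exact h

end Aux4

section Aux5
variable {p : ℕ} {φ : ℕ → ℂ}

lemma extB1 (hp : 2 ≤ p) {D : V p → V p} (hD : D ∈ derF p (mu p φ)) :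
    ent p (D (X p 2)) 1 = 0 := by
  obtain ⟨hadd, hsmul, hleib⟩ := hD
  have hDneg : ∀ v, D (-v) = -(D v) := fun v => by
    rw [← neg_one_smul ℂ v, hsmul, neg_one_smul]
  have eqn := hleib (X p 1) (X p 2)
  rw [mbb1 hp, hDneg] at eqn
  have h0 : (0:ℕ) < 2*p := by omega
  have e := congrFun eqn ⟨0, h0⟩
  rw [Pi.neg_apply, Pi.add_apply, mu_apply, mu_apply, ← ent_lt h0 (D (X p 1))] at e
  simp only [ent_X, Fin.val_mk, eq_self_iff_true, if_true, true_and, and_true] at e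
  rw [Finset.sum_eq_zero (fun l hl => by
      simp only [Finset.mem_Icc] at hl
      split_ifs <;> first | ring1 | (exfalso; omega)),
    Finset.sum_eq_zero (fun l hl => by
      simp only [Finset.mem_Icc] at hl
      split_ifs <;> first | ring1 | (exfalso; omega))] at e
  try (split_ifs at e) <;> try (exfalso; omega)
  linear_combination e

lemma extC (hp : 2 ≤ p) (hΩ : AvoidsOmega1 p φ) {D : V p → V p}
    (hD : D ∈ derF p (mu p φ)) {k : ℕ} (hk1 : 1 ≤ k) (hk2 : k ≤ p-1)
    {m : ℕ} (hm : m < 2*p) (h0 : m ≠ 0) (h2k : m ≠ 2*k) :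
    ent p (D (X p (2*k+1))) m = 0 := by
  obtain ⟨hadd, hsmul, hleib⟩ := hD
  have eqn := hleib (X p 2) (X p (2*k+1))
  rw [mbb2 hp hk1 hk2, hsmul] at eqn
  have e := congrFun eqn ⟨m, hm⟩
  rw [Pi.smul_apply, Pi.add_apply, mu_apply, mu_apply, ← ent_lt hm (D (X p (2*k+1)))] at e
  simp only [ent_X, Fin.val_mk, true_and, and_true, smul_eq_mul] at e
  have hΩk := hΩ k k hk1 hk2 hk1 hk2
  by_cases h1 : m = 1
  · subst h1
    simp only [eq_false (show ¬(1 = 0) from by omega), eq_false (show ¬((1:ℕ) + 1 = 1) from by omega),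
      eq_self_iff_true, if_true, if_false] at e
    try (split_ifs at e) <;> try (exfalso; omega)
    all_goals {
      have hz : -(φ k) * ent p (D (X p (2*k+1))) 1 = 0 := by linear_combination e
      rcases mul_eq_zero.mp hz with h | h
      · exact absurd (show φ k = 0 by linear_combination -h) hΩk.2.2.2.1
      · exact h }
  · simp only [eq_false h0, eq_false h1, if_false] at e
    by_cases he : m % 2 = 0
    · simp only [eq_true he, if_true] at e
      try (split_ifs at e) <;> try (exfalso; omega)
      have hΩ2 := hΩ (m/2) k (by omega) (by omega) hk1 hk2
      have hne : φ (m/2) - φ k ≠ 0 := sub_ne_zero_of_ne (hΩ2.2.2.1 (by omega))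
      have hz : (φ (m/2) - φ k) * ent p (D (X p (2*k+1))) m = 0 := by linear_combination e
      rcases mul_eq_zero.mp hz with h | h
      · exact absurd h hne
      · exact h
    · simp only [eq_false he, if_false] at e
      try (split_ifs at e) <;> try (exfalso; omega)
      have hΩ2 := hΩ (m/2) k (by omega) (by omega) hk1 hk2
      have hz : (1 + φ (m/2) + φ k) * ent p (D (X p (2*k+1))) m = 0 := by linear_combination -e
      rcases mul_eq_zero.mp hz with h | h
      · exact absurd h hΩ2.1
      · exact h

lemma extBodd (hp : 2 ≤ p) {D : V p → V p} (hD : D ∈ derF p (mu p φ))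
    {k : ℕ} (hk1 : 1 ≤ k) (hk2 : k ≤ p-1) :
    ent p (D (X p 2)) (2*k+1) = -(1+φ k) * ent p (D (X p (2*k+1))) 0 := by
  obtain ⟨hadd, hsmul, hleib⟩ := hD
  have eqn := hleib (X p 2) (X p (2*k+1))
  rw [mbb2 hp hk1 hk2, hsmul] at eqn
  have h0 : (0:ℕ) < 2*p := by omega
  have e := congrFun eqn ⟨0, h0⟩
  rw [Pi.smul_apply, Pi.add_apply, mu_apply, mu_apply, ← ent_lt h0 (D (X p (2*k+1)))] at e
  simp only [ent_X, Fin.val_mk, eq_self_iff_true, if_true, true_and, and_true, smul_eq_mul] at e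
  rw [Finset.sum_eq_single k (fun l hl hne => by
      simp only [Finset.mem_Icc] at hl
      split_ifs <;> first | ring1 | (exfalso; omega))
    (fun hn => absurd (by simp only [Finset.mem_Icc]; omega) hn),
    Finset.sum_eq_zero (fun l hl => by
      simp only [Finset.mem_Icc] at hl
      split_ifs <;> first | ring1 | (exfalso; omega))] at e
  try (split_ifs at e) <;> try (exfalso; omega)
  linear_combination -e

lemma extE (hp : 2 ≤ p) (hΩ : AvoidsOmega1 p φ) {D : V p → V p}
    (hD : D ∈ derF p (mu p φ)) {k : ℕ} (hk1 : 1 ≤ k) (hk2 : k ≤ p-1)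
    {m : ℕ} (hm : m < 2*p) (h0 : m ≠ 0) (h2k : m ≠ 2*k+1) :
    ent p (D (X p (2*k+2))) m = 0 := by
  obtain ⟨hadd, hsmul, hleib⟩ := hD
  have eqn := hleib (X p 2) (X p (2*k+2))
  rw [mbb3 hp hk1 hk2, hsmul] at eqn
  have e := congrFun eqn ⟨m, hm⟩
  rw [Pi.smul_apply, Pi.add_apply, mu_apply, mu_apply, ← ent_lt hm (D (X p (2*k+2)))] at e
  simp only [ent_X, Fin.val_mk, true_and, and_true, smul_eq_mul] at e
  have hΩk := hΩ k k hk1 hk2 hk1 hk2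
  have h1φk : 1 + φ k ≠ 0 := fun hc => hΩk.2.2.2.2.1 (by linear_combination hc)
  by_cases h1 : m = 1
  · subst h1
    simp only [eq_false (show ¬(1 = 0) from by omega), eq_self_iff_true, if_true, if_false] at e
    try (split_ifs at e) <;> try (exfalso; omega)
    all_goals {
      have hz : (1 + φ k) * ent p (D (X p (2*k+2))) 1 = 0 := by linear_combination e
      rcases mul_eq_zero.mp hz with h | h
      · exact absurd h h1φk
      · exact h }
  · simp only [eq_false h0, eq_false h1, if_false] at e
    by_cases he : m % 2 = 0
    · simp only [eq_true he, if_true] at e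
      try (split_ifs at e) <;> try (exfalso; omega)
      have hΩ2 := hΩ k (m/2) hk1 hk2 (by omega) (by omega)
      have hz : (1 + φ k + φ (m/2)) * ent p (D (X p (2*k+2))) m = 0 := by linear_combination e
      rcases mul_eq_zero.mp hz with h | h
      · exact absurd h hΩ2.1
      · exact h
    · simp only [eq_false he, if_false] at e
      try (split_ifs at e) <;> try (exfalso; omega)
      have hΩ2 := hΩ k (m/2) hk1 hk2 (by omega) (by omega)
      have hne : φ k - φ (m/2) ≠ 0 := sub_ne_zero_of_ne (hΩ2.2.2.1 (by omega))
      have hz : (φ k - φ (m/2)) * ent p (D (X p (2*k+2))) m = 0 := by linear_combination e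
      rcases mul_eq_zero.mp hz with h | h
      · exact absurd h hne
      · exact h

lemma extBeven (hp : 2 ≤ p) {D : V p → V p} (hD : D ∈ derF p (mu p φ))
    {k : ℕ} (hk1 : 1 ≤ k) (hk2 : k ≤ p-1) :
    ent p (D (X p 2)) (2*k) = -(φ k) * ent p (D (X p (2*k+2))) 0 := by
  obtain ⟨hadd, hsmul, hleib⟩ := hD
  have eqn := hleib (X p 2) (X p (2*k+2))
  rw [mbb3 hp hk1 hk2, hsmul] at eqn
  have h0 : (0:ℕ) < 2*p := by omega
  have e := congrFun eqn ⟨0, h0⟩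
  rw [Pi.smul_apply, Pi.add_apply, mu_apply, mu_apply, ← ent_lt h0 (D (X p (2*k+2)))] at e
  simp only [ent_X, Fin.val_mk, eq_self_iff_true, if_true, true_and, and_true, smul_eq_mul] at e
  rw [Finset.sum_eq_single k (fun l hl hne => by
      simp only [Finset.mem_Icc] at hl
      split_ifs <;> first | ring1 | (exfalso; omega))
    (fun hn => absurd (by simp only [Finset.mem_Icc]; omega) hn),
    Finset.sum_eq_zero (fun l hl => by
      simp only [Finset.mem_Icc] at hl
      split_ifs <;> first | ring1 | (exfalso; omega))] at e
  try (split_ifs at e) <;> try (exfalso; omega)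
  linear_combination e

lemma extSum (hp : 2 ≤ p) {D : V p → V p} (hD : D ∈ derF p (mu p φ))
    {k : ℕ} (hk1 : 1 ≤ k) (hk2 : k ≤ p-1) :
    ent p (D (X p 1)) 0
      = ent p (D (X p (2*k+1))) (2*k) + ent p (D (X p (2*k+2))) (2*k+1) := by
  obtain ⟨hadd, hsmul, hleib⟩ := hD
  have hDneg : ∀ v, D (-v) = -(D v) := fun v => by
    rw [← neg_one_smul ℂ v, hsmul, neg_one_smul]
  have eqn := hleib (X p (2*k+1)) (X p (2*k+2))
  rw [mbb4 hp hk1 hk2, hDneg] at eqn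
  have h0 : (0:ℕ) < 2*p := by omega
  have e := congrFun eqn ⟨0, h0⟩
  rw [Pi.neg_apply, Pi.add_apply, mu_apply, mu_apply, ← ent_lt h0 (D (X p 1))] at e
  simp only [ent_X, Fin.val_mk, eq_self_iff_true, if_true, true_and, and_true] at e
  rw [Finset.sum_eq_single k (fun l hl hne => by
      simp only [Finset.mem_Icc] at hl
      split_ifs <;> first | ring1 | (exfalso; omega))
    (fun hn => absurd (by simp only [Finset.mem_Icc]; omega) hn),
    Finset.sum_eq_single k (fun l hl hne => by
      simp only [Finset.mem_Icc] at hl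
      split_ifs <;> first | ring1 | (exfalso; omega))
    (fun hn => absurd (by simp only [Finset.mem_Icc]; omega) hn)] at e
  try (split_ifs at e) <;> try (exfalso; omega)
  linear_combination -e

end Aux5

section Aux6
variable {p : ℕ} {φ : ℕ → ℂ}

lemma X_eq_single (i : Fin (2*p)) : X p ((i:ℕ)+1) = Pi.single i 1 := by
  funext j
  simp only [X, Pi.single_apply]
  by_cases h : j = i
  · subst h; simp
  · rw [if_neg (fun hc => h (Fin.ext (by omega))), if_neg h]

lemma funext_basis {D : V p → V p} (hadd : ∀ x y, D (x+y) = D x + D y)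
    (hsmul : ∀ (c:ℂ) x, D (c • x) = c • D x) (g : V p →ₗ[ℂ] V p)
    (h : ∀ i : Fin (2*p), D (X p ((i:ℕ)+1)) = g (X p ((i:ℕ)+1))) : D = fun y => g y := by
  let Dl : V p →ₗ[ℂ] V p := { toFun := D, map_add' := hadd, map_smul' := hsmul }
  have hDg : Dl = g := (Pi.basisFun ℂ (Fin (2*p))).ext fun i => by
    have hx := h i
    rw [X_eq_single] at hx
    show D (Pi.basisFun ℂ (Fin (2*p)) i) = g (Pi.basisFun ℂ (Fin (2*p)) i)
    simpa [Pi.basisFun_apply] using hx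
  funext y
  exact congrFun (congrArg DFunLike.coe hDg) y

def Tmap (p : ℕ) (φ : ℕ → ℂ) : (derF p (mu p φ)) →ₗ[ℂ] (Fin (p-1) → ℂ) where
  toFun D := fun k => ent p ((D : V p → V p) (X p (2*((k:ℕ)+1)+1))) (2*((k:ℕ)+1))
      + φ ((k:ℕ)+1) * ent p ((D : V p → V p) (X p 1)) 0
  map_add' D E := by
    funext k
    simp only [Submodule.coe_add, Pi.add_apply, ent_add]
    ring
  map_smul' c D := by
    funext k
    simp only [Submodule.coe_smul, Pi.smul_apply, ent_smul, RingHom.id_apply, smul_eq_mul]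
    ring

def cExt (p : ℕ) (c : Fin (p-1) → ℂ) (n : ℕ) : ℂ := if h : n - 1 < p - 1 then c ⟨n-1, h⟩ else 0

def wtN (p : ℕ) (c : Fin (p-1) → ℂ) (m : ℕ) : ℂ :=
  if m < 2 then 0 else if m % 2 = 0 then cExt p c (m/2) else -(cExt p c (m/2))

def diagD (p : ℕ) (c : Fin (p-1) → ℂ) : V p → V p := fun x i => wtN p c (i:ℕ) * x i

lemma ent_diagD (c : Fin (p-1) → ℂ) (x : V p) (m : ℕ) :
    ent p (diagD p c x) m = wtN p c m * ent p x m := by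
  unfold ent diagD; split <;> simp

lemma wt0 (c : Fin (p-1) → ℂ) : wtN p c 0 = 0 := by norm_num [wtN]
lemma wt1 (c : Fin (p-1) → ℂ) : wtN p c 1 = 0 := by norm_num [wtN]
lemma wt_even (c : Fin (p-1) → ℂ) (k : ℕ) (hk : 1 ≤ k) : wtN p c (2*k) = cExt p c k := by
  unfold wtN; rw [if_neg (by omega), if_pos (by omega), show 2*k/2 = k from by omega]
lemma wt_odd (c : Fin (p-1) → ℂ) (k : ℕ) (hk : 1 ≤ k) : wtN p c (2*k+1) = -(cExt p c k) := by
  unfold wtN; rw [if_neg (by omega), if_neg (by omega), show (2*k+1)/2 = k from by omega]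

lemma diagD_mem (c : Fin (p-1) → ℂ) : diagD p c ∈ derF p (mu p φ) := by
  refine ⟨fun x y => by funext i; simp only [diagD, Pi.add_apply]; ring,
          fun a x => by funext i; simp only [diagD, Pi.smul_apply, smul_eq_mul]; ring,
          fun x y => ?_⟩
  funext i
  show wtN p c (i:ℕ) * (mu p φ x y) i
    = ((mu p φ) (diagD p c x) y + (mu p φ) x (diagD p c y)) i
  rw [Pi.add_apply, mu_apply, mu_apply, mu_apply]
  simp only [ent_diagD, wt0, wt1, zero_mul, mul_zero]
  by_cases h0 : (i:ℕ) = 0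
  · simp only [eq_true h0, if_true, h0, wt0, zero_mul, zero_sub, sub_zero, sub_self]
    rw [← neg_add, ← Finset.sum_add_distrib, Finset.sum_eq_zero (fun l hl => by
      simp only [Finset.mem_Icc] at hl
      rw [wt_even c l hl.1, wt_odd c l hl.1]
      ring1)]
    simp
  · by_cases h1 : (i:ℕ) = 1
    · simp only [eq_false h0, eq_true h1, if_false, if_true, h1, wt1, zero_mul, mul_zero]
      norm_num
    · by_cases he : (i:ℕ) % 2 = 0
      · simp only [eq_false h0, eq_false h1, eq_true he, if_false, if_true]
        ring1
      · simp only [eq_false h0, eq_false h1, eq_false he, if_false]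
        ring1

lemma T_diagD (hp : 2 ≤ p) (c : Fin (p-1) → ℂ) :
    Tmap p φ ⟨diagD p c, diagD_mem c⟩ = c := by
  funext k
  have hk := k.isLt
  show ent p (diagD p c (X p (2*((k:ℕ)+1)+1))) (2*((k:ℕ)+1))
      + φ ((k:ℕ)+1) * ent p (diagD p c (X p 1)) 0 = c k
  rw [ent_diagD, ent_diagD, wt0, wt_even c ((k:ℕ)+1) (by omega), ent_X,
    if_pos (show 2*((k:ℕ)+1) + 1 = 2*((k:ℕ)+1)+1 ∧ 2*((k:ℕ)+1) < 2*p from ⟨rfl, by omega⟩)]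
  unfold cExt
  rw [dif_pos (show (k:ℕ)+1-1 < p-1 from by omega)]
  simp [Fin.eta]

lemma T_surj (hp : 2 ≤ p) : Function.Surjective (Tmap p φ) :=
  fun c => ⟨⟨diagD p c, diagD_mem c⟩, T_diagD hp c⟩

end Aux6

lemma Tmap_apply (Dd : derF p (mu p φ)) (k : Fin (p-1)) :
    Tmap p φ Dd k = ent p ((Dd : V p → V p) (X p (2*((k:ℕ)+1)+1))) (2*((k:ℕ)+1))
      + φ ((k:ℕ)+1) * ent p ((Dd : V p → V p) (X p 1)) 0 := rfl

section Aux7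
variable {p : ℕ} {φ : ℕ → ℂ}

def vD (p : ℕ) (D : V p → V p) : V p := fun i =>
  if (i:ℕ) = 0 then -(ent p (D (X p 2)) 0)
  else if (i:ℕ) = 1 then ent p (D (X p 1)) 0
  else if (i:ℕ) % 2 = 0 then -(ent p (D (X p ((i:ℕ)+2))) 0)
  else ent p (D (X p (i:ℕ))) 0

variable {D : V p → V p}

lemma vD0 (hp : 2 ≤ p) : ent p (vD p D) 0 = -(ent p (D (X p 2)) 0) := by
  rw [ent_lt (by omega : (0:ℕ) < 2*p)]; simp [vD]

lemma vD1 (hp : 2 ≤ p) : ent p (vD p D) 1 = ent p (D (X p 1)) 0 := by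
  rw [ent_lt (by omega : (1:ℕ) < 2*p)]; simp [vD]

lemma vDe (hp : 2 ≤ p) {l : ℕ} (h1 : 1 ≤ l) (h2 : l ≤ p-1) :
    ent p (vD p D) (2*l) = -(ent p (D (X p (2*l+2))) 0) := by
  rw [ent_lt (by omega : 2*l < 2*p)]
  show (if 2*l = 0 then _ else if 2*l = 1 then _ else if 2*l % 2 = 0 then
    -(ent p (D (X p (2*l+2))) 0) else _) = _
  rw [if_neg (by omega : ¬(2*l = 0)), if_neg (by omega : ¬(2*l = 1)),
    if_pos (by omega : 2*l % 2 = 0)]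

lemma vDo (hp : 2 ≤ p) {l : ℕ} (h1 : 1 ≤ l) (h2 : l ≤ p-1) :
    ent p (vD p D) (2*l+1) = ent p (D (X p (2*l+1))) 0 := by
  rw [ent_lt (by omega : 2*l+1 < 2*p)]
  show (if 2*l+1 = 0 then _ else if 2*l+1 = 1 then _ else if (2*l+1) % 2 = 0 then _
    else ent p (D (X p (2*l+1))) 0) = _
  rw [if_neg (by omega : ¬(2*l+1 = 0)), if_neg (by omega : ¬(2*l+1 = 1)),
    if_neg (by omega : ¬((2*l+1) % 2 = 0))]

lemma case1 (hp : 2 ≤ p) (hΩ : AvoidsOmega1 p φ) (hD : D ∈ derF p (mu p φ)) :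
    D (X p 1) = mu p φ (vD p D) (X p 1) := by
  funext i
  rw [← ent_val (D (X p 1)) i, mu_apply]
  by_cases h0 : (i:ℕ) = 0
  · rw [if_pos h0, h0, Finset.sum_eq_zero (fun l hl => by
      simp only [Finset.mem_Icc] at hl
      simp only [ent_X, true_and]
      split_ifs <;> first | ring1 | (exfalso; omega))]
    simp only [ent_X, true_and]
    rw [vD1 hp, vD0 hp]
    split_ifs <;> first | ring1 | (exfalso; omega)
  · by_cases h1 : (i:ℕ) = 1
    · rw [if_neg h0, if_pos h1, h1, extA hp hΩ hD (by omega) (by omega)]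
    · rw [if_neg h0, if_neg h1, extA hp hΩ hD i.isLt h0]
      simp only [ent_X, true_and]
      rw [vD1 hp]
      split_ifs <;> first | ring1 | (exfalso; omega)

lemma case2 (hp : 2 ≤ p) (hΩ : AvoidsOmega1 p φ) (hD : D ∈ derF p (mu p φ)) :
    D (X p 2) = mu p φ (vD p D) (X p 2) := by
  funext i
  rw [← ent_val (D (X p 2)) i, mu_apply]
  by_cases h0 : (i:ℕ) = 0
  · rw [if_pos h0, h0, Finset.sum_eq_zero (fun l hl => by
      simp only [Finset.mem_Icc] at hl
      simp only [ent_X, true_and]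
      split_ifs <;> first | ring1 | (exfalso; omega))]
    simp only [ent_X, true_and]
    rw [vD1 hp, vD0 hp]
    split_ifs <;> first | ring1 | (exfalso; omega)
  · by_cases h1 : (i:ℕ) = 1
    · rw [if_neg h0, if_pos h1, h1, extB1 hp hD]
    · by_cases he : (i:ℕ) % 2 = 0
      · obtain ⟨l, hl⟩ : ∃ l, (i:ℕ) = 2*l := ⟨(i:ℕ)/2, by omega⟩
        have hl1 : 1 ≤ l := by omega
        have hl2 : l ≤ p - 1 := by have := i.isLt; omega
        rw [if_neg h0, if_neg h1, if_pos he, hl, show 2*l/2 = l from by omega]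
        simp only [ent_X, true_and]
        rw [vD1 hp, vDe hp hl1 hl2, extBeven hp hD hl1 hl2]
        split_ifs <;> first | ring1 | (exfalso; omega)
      · obtain ⟨l, hl⟩ : ∃ l, (i:ℕ) = 2*l+1 := ⟨(i:ℕ)/2, by omega⟩
        have hl1 : 1 ≤ l := by omega
        have hl2 : l ≤ p - 1 := by have := i.isLt; omega
        rw [if_neg h0, if_neg h1, if_neg he, hl, show (2*l+1)/2 = l from by omega]
        simp only [ent_X, true_and]
        rw [vD1 hp, vDo hp hl1 hl2, extBodd hp hD hl1 hl2]
        split_ifs <;> first | ring1 | (exfalso; omega)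

lemma case3 (hp : 2 ≤ p) (hΩ : AvoidsOmega1 p φ) (hD : D ∈ derF p (mu p φ))
    {k : ℕ} (hk1 : 1 ≤ k) (hk2 : k ≤ p-1)
    (hK : ent p (D (X p (2*k+1))) (2*k) = -(φ k) * ent p (D (X p 1)) 0) :
    D (X p (2*k+1)) = mu p φ (vD p D) (X p (2*k+1)) := by
  funext i
  rw [← ent_val (D (X p (2*k+1))) i, mu_apply]
  by_cases h0 : (i:ℕ) = 0
  · rw [if_pos h0, h0, Finset.sum_eq_single k (fun l hl hne => by
      simp only [Finset.mem_Icc] at hl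
      simp only [ent_X, true_and]
      split_ifs <;> first | ring1 | (exfalso; omega))
      (fun hn => absurd (by simp only [Finset.mem_Icc]; omega) hn)]
    simp only [ent_X, true_and]
    rw [vD1 hp, vD0 hp, vDe hp hk1 hk2, vDo hp hk1 hk2]
    split_ifs <;> first | ring1 | (exfalso; omega)
  · by_cases h1 : (i:ℕ) = 1
    · rw [if_neg h0, if_pos h1, h1, extC hp hΩ hD hk1 hk2 (by omega) (by omega) (by omega)]
    · by_cases he : (i:ℕ) % 2 = 0
      · obtain ⟨l, hl⟩ : ∃ l, (i:ℕ) = 2*l := ⟨(i:ℕ)/2, by omega⟩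
        have hl1 : 1 ≤ l := by omega
        have hl2 : l ≤ p - 1 := by have := i.isLt; omega
        rw [if_neg h0, if_neg h1, if_pos he, hl, show 2*l/2 = l from by omega]
        by_cases hlk : l = k
        · subst hlk
          simp only [ent_X, true_and]
          rw [vD1 hp, vDe hp hl1 hl2, hK]
          split_ifs <;> first | ring1 | (exfalso; omega)
        · simp only [ent_X, true_and]
          rw [vD1 hp, vDe hp hl1 hl2,
            extC hp hΩ hD hk1 hk2 (by omega : 2*l < 2*p) (by omega) (by omega)]
          split_ifs <;> first | ring1 | (exfalso; omega)
      · obtain ⟨l, hl⟩ : ∃ l, (i:ℕ) = 2*l+1 := ⟨(i:ℕ)/2, by omega⟩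
        have hl1 : 1 ≤ l := by omega
        have hl2 : l ≤ p - 1 := by have := i.isLt; omega
        rw [if_neg h0, if_neg h1, if_neg he, hl, show (2*l+1)/2 = l from by omega]
        simp only [ent_X, true_and]
        rw [vD1 hp, vDo hp hl1 hl2,
          extC hp hΩ hD hk1 hk2 (by omega : 2*l+1 < 2*p) (by omega) (by omega)]
        split_ifs <;> first | ring1 | (exfalso; omega)

lemma case4 (hp : 2 ≤ p) (hΩ : AvoidsOmega1 p φ) (hD : D ∈ derF p (mu p φ))
    {k : ℕ} (hk1 : 1 ≤ k) (hk2 : k ≤ p-1)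
    (hE : ent p (D (X p (2*k+2))) (2*k+1) = (1 + φ k) * ent p (D (X p 1)) 0) :
    D (X p (2*k+2)) = mu p φ (vD p D) (X p (2*k+2)) := by
  funext i
  rw [← ent_val (D (X p (2*k+2))) i, mu_apply]
  by_cases h0 : (i:ℕ) = 0
  · rw [if_pos h0, h0, Finset.sum_eq_single k (fun l hl hne => by
      simp only [Finset.mem_Icc] at hl
      simp only [ent_X, true_and]
      split_ifs <;> first | ring1 | (exfalso; omega))
      (fun hn => absurd (by simp only [Finset.mem_Icc]; omega) hn)]
    simp only [ent_X, true_and]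
    rw [vD1 hp, vD0 hp, vDe hp hk1 hk2, vDo hp hk1 hk2]
    split_ifs <;> first | ring1 | (exfalso; omega)
  · by_cases h1 : (i:ℕ) = 1
    · rw [if_neg h0, if_pos h1, h1, extE hp hΩ hD hk1 hk2 (by omega) (by omega) (by omega)]
    · by_cases he : (i:ℕ) % 2 = 0
      · obtain ⟨l, hl⟩ : ∃ l, (i:ℕ) = 2*l := ⟨(i:ℕ)/2, by omega⟩
        have hl1 : 1 ≤ l := by omega
        have hl2 : l ≤ p - 1 := by have := i.isLt; omega
        rw [if_neg h0, if_neg h1, if_pos he, hl, show 2*l/2 = l from by omega]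
        simp only [ent_X, true_and]
        rw [vD1 hp, vDe hp hl1 hl2,
          extE hp hΩ hD hk1 hk2 (by omega : 2*l < 2*p) (by omega) (by omega)]
        split_ifs <;> first | ring1 | (exfalso; omega)
      · obtain ⟨l, hl⟩ : ∃ l, (i:ℕ) = 2*l+1 := ⟨(i:ℕ)/2, by omega⟩
        have hl1 : 1 ≤ l := by omega
        have hl2 : l ≤ p - 1 := by have := i.isLt; omega
        rw [if_neg h0, if_neg h1, if_neg he, hl, show (2*l+1)/2 = l from by omega]
        by_cases hlk : l = k
        · subst hlk
          simp only [ent_X, true_and]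
          rw [vD1 hp, vDo hp hl1 hl2, hE]
          split_ifs <;> first | ring1 | (exfalso; omega)
        · simp only [ent_X, true_and]
          rw [vD1 hp, vDo hp hl1 hl2,
            extE hp hΩ hD hk1 hk2 (by omega : 2*l+1 < 2*p) (by omega) (by omega)]
          split_ifs <;> first | ring1 | (exfalso; omega)

end Aux7

section Aux8
variable {p : ℕ} {φ : ℕ → ℂ}

lemma ker_T (hp : 2 ≤ p) (hΩ : AvoidsOmega1 p φ) :
    LinearMap.ker (Tmap p φ)
      = Submodule.comap (derF p (mu p φ)).subtype (innerF p (mu p φ)) := by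
  ext D
  simp only [LinearMap.mem_ker, Submodule.mem_comap, Submodule.subtype_apply]
  constructor
  · intro hT
    show ∃ v, (D : V p → V p) = fun y => mu p φ v y
    obtain ⟨hadd, hsmul, hleib⟩ := D.2
    have hK : ∀ k : ℕ, 1 ≤ k → k ≤ p-1 →
        ent p ((D : V p → V p) (X p (2*k+1))) (2*k)
          = -(φ k) * ent p ((D : V p → V p) (X p 1)) 0 := by
      intro k hk1 hk2
      have h := congrFun hT (⟨k-1, by omega⟩ : Fin (p-1))
      rw [Tmap_apply, Pi.zero_apply] at h
      rw [show ((⟨k-1, by omega⟩ : Fin (p-1)) : ℕ) + 1 = k from by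
        simp only [Fin.val_mk]; omega] at h
      linear_combination h
    have hE : ∀ k : ℕ, 1 ≤ k → k ≤ p-1 →
        ent p ((D : V p → V p) (X p (2*k+2))) (2*k+1)
          = (1 + φ k) * ent p ((D : V p → V p) (X p 1)) 0 := by
      intro k hk1 hk2
      have hs := extSum hp D.2 hk1 hk2
      rw [hK k hk1 hk2] at hs
      linear_combination -hs
    refine ⟨vD p (D : V p → V p), ?_⟩
    apply funext_basis hadd hsmul ((mu p φ) (vD p (D : V p → V p)))
    intro i
    by_cases h0 : (i:ℕ) = 0
    · rw [show (i:ℕ)+1 = 1 from by omega]; exact case1 hp hΩ D.2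
    · by_cases h1 : (i:ℕ) = 1
      · rw [show (i:ℕ)+1 = 2 from by omega]; exact case2 hp hΩ D.2
      · by_cases he : (i:ℕ) % 2 = 0
        · obtain ⟨l, hl⟩ : ∃ l, (i:ℕ) = 2*l := ⟨(i:ℕ)/2, by omega⟩
          have hl1 : 1 ≤ l := by omega
          have hl2 : l ≤ p-1 := by have := i.isLt; omega
          rw [show (i:ℕ)+1 = 2*l+1 from by omega]
          exact case3 hp hΩ D.2 hl1 hl2 (hK l hl1 hl2)
        · obtain ⟨l, hl⟩ : ∃ l, (i:ℕ) = 2*l+1 := ⟨(i:ℕ)/2, by omega⟩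
          have hl1 : 1 ≤ l := by omega
          have hl2 : l ≤ p-1 := by have := i.isLt; omega
          rw [show (i:ℕ)+1 = 2*l+2 from by omega]
          exact case4 hp hΩ D.2 hl1 hl2 (hE l hl1 hl2)
  · intro hin
    obtain ⟨v, hv⟩ : ∃ v, (D : V p → V p) = fun y => mu p φ v y := hin
    funext k
    have hk := k.isLt
    rw [Tmap_apply, Pi.zero_apply, hv]
    show ent p (mu p φ v (X p (2*((k:ℕ)+1)+1))) (2*((k:ℕ)+1))
        + φ ((k:ℕ)+1) * ent p (mu p φ v (X p 1)) 0 = 0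
    rw [ent_lt (show 2*((k:ℕ)+1) < 2*p from by omega)
          (mu p φ v (X p (2*((k:ℕ)+1)+1))), mu_apply,
        ent_lt (show (0:ℕ) < 2*p from by omega) (mu p φ v (X p 1)), mu_apply]
    simp only [Fin.val_mk]
    rw [if_neg (by omega : ¬(2*((k:ℕ)+1) = 0)), if_neg (by omega : ¬(2*((k:ℕ)+1) = 1)),
      if_pos (by omega : 2*((k:ℕ)+1) % 2 = 0), if_pos trivial,
      show 2*((k:ℕ)+1)/2 = (k:ℕ)+1 from by omega,
      Finset.sum_eq_zero (fun l hl => by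
        simp only [Finset.mem_Icc] at hl
        simp only [ent_X, true_and]
        split_ifs <;> first | ring1 | (exfalso; omega))]
    simp only [ent_X, true_and]
    split_ifs <;> first | ring1 | (exfalso; omega)

end Aux8


/-- if `φ` avoids `Ω₁` then `dim H¹(F_φ, F_φ) = p − 1`, i.e. the
quotient of the space of derivations of `F_φ` by the subspace of inner
derivations has dimension `p − 1`. -/
theorem stmt5 (p : ℕ) (hp : 2 ≤ p) (φ : ℕ → ℂ) (hΩ : AvoidsOmega1 p φ) :
    Module.finrank ℂ
      (↥(derF p (mu p φ)) ⧸
        Submodule.comap (derF p (mu p φ)).subtype (innerF p (mu p φ)))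
      = p - 1 := by
  rw [← ker_T hp hΩ]
  rw [LinearEquiv.finrank_eq ((Tmap p φ).quotKerEquivOfSurjective (T_surj hp))]
  rw [Module.finrank_pi, Fintype.card_fin]
end
end

section
/- If φ avoids Ω₁, then the Lie algebra Der(F_φ) of derivations of F_φ is 3-step solvable: writing D⁰ = Der(F_φ) and D^{m+1} = [D^m, D^m] for its derived series, one has D³ = 0 and D² ≠ 0. -/
open scoped BigOperators

noncomputable section

attribute [local instance 100] LieRing.ofAssociativeRing

/-! ### Auxiliary infrastructure for stmt8 -/

namespace St8

open Finset

/-- Coefficient of `X 1` in `mu x y`. -/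
def C1 (p : ℕ) (x y : V p) : ℂ :=
  -(coordL p 1 x * coordL p 2 y - coordL p 2 x * coordL p 1 y)
    - ∑ k ∈ Icc 1 (p-1), (coordL p (2*k+1) x * coordL p (2*k+2) y
        - coordL p (2*k+2) x * coordL p (2*k+1) y)

/-- Coefficient of `X (2k+1)` in `mu x y`. -/
def Co (p : ℕ) (φ : ℕ → ℂ) (k : ℕ) (x y : V p) : ℂ :=
  -(φ k) * (coordL p 2 x * coordL p (2*k+1) y - coordL p (2*k+1) x * coordL p 2 y)

/-- Coefficient of `X (2k+2)` in `mu x y`. -/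
def Ce (p : ℕ) (φ : ℕ → ℂ) (k : ℕ) (x y : V p) : ℂ :=
  (1 + φ k) * (coordL p 2 x * coordL p (2*k+2) y - coordL p (2*k+2) x * coordL p 2 y)

/-- A canonical-form linear combination of the basis vectors. -/
def comb (p : ℕ) (c1 c2 : ℂ) (a b : ℕ → ℂ) : V p :=
  c1 • X p 1 + c2 • X p 2 + ∑ k ∈ Icc 1 (p-1), (a k • X p (2*k+1) + b k • X p (2*k+2))

lemma coordL_apply (p j : ℕ) (h1 : 1 ≤ j) (h2 : j ≤ 2*p) (x : V p) :
    coordL p j x = x ⟨j-1, by omega⟩ := by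
  rw [coordL, dif_pos (by omega : j - 1 < 2*p)]; rfl

lemma coordL_X_eq (p a : ℕ) (h1 : 1 ≤ a) (h2 : a ≤ 2*p) : coordL p a (X p a) = 1 := by
  rw [coordL_apply p a h1 h2]
  show (if (a-1) + 1 = a then (1:ℂ) else 0) = 1
  rw [if_pos (by omega)]

lemma coordL_X_ne (p a b : ℕ) (h1 : 1 ≤ a) (h2 : a ≤ 2*p) (hne : a ≠ b) :
    coordL p a (X p b) = 0 := by
  rw [coordL_apply p a h1 h2]
  show (if (a-1) + 1 = b then (1:ℂ) else 0) = 0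
  rw [if_neg (by omega)]

section

variable {p : ℕ} (hp : 2 ≤ p)

include hp

lemma comb_coord_one (c1 c2 : ℂ) (a b : ℕ → ℂ) :
    coordL p 1 (comb p c1 c2 a b) = c1 := by
  rw [comb, map_add, map_add, map_smul, map_smul, map_sum]
  rw [coordL_X_eq p 1 (by omega) (by omega), coordL_X_ne p 1 2 (by omega) (by omega) (by omega)]
  rw [Finset.sum_eq_zero]
  · simp
  · intro k hk
    rw [Finset.mem_Icc] at hk
    rw [map_add, map_smul, map_smul,
      coordL_X_ne p 1 (2*k+1) (by omega) (by omega) (by omega),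
      coordL_X_ne p 1 (2*k+2) (by omega) (by omega) (by omega)]
    simp

lemma comb_coord_two (c1 c2 : ℂ) (a b : ℕ → ℂ) :
    coordL p 2 (comb p c1 c2 a b) = c2 := by
  rw [comb, map_add, map_add, map_smul, map_smul, map_sum]
  rw [coordL_X_eq p 2 (by omega) (by omega), coordL_X_ne p 2 1 (by omega) (by omega) (by omega)]
  rw [Finset.sum_eq_zero]
  · simp
  · intro k hk
    rw [Finset.mem_Icc] at hk
    rw [map_add, map_smul, map_smul,
      coordL_X_ne p 2 (2*k+1) (by omega) (by omega) (by omega),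
      coordL_X_ne p 2 (2*k+2) (by omega) (by omega) (by omega)]
    simp

lemma comb_coord_odd (c1 c2 : ℂ) (a b : ℕ → ℂ) {k : ℕ} (hk : k ∈ Icc 1 (p-1)) :
    coordL p (2*k+1) (comb p c1 c2 a b) = a k := by
  rw [Finset.mem_Icc] at hk
  rw [comb, map_add, map_add, map_smul, map_smul, map_sum]
  rw [coordL_X_ne p (2*k+1) 1 (by omega) (by omega) (by omega),
    coordL_X_ne p (2*k+1) 2 (by omega) (by omega) (by omega)]
  rw [Finset.sum_eq_single_of_mem k (Finset.mem_Icc.mpr (by omega))]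
  · rw [map_add, map_smul, map_smul, coordL_X_eq p (2*k+1) (by omega) (by omega),
      coordL_X_ne p (2*k+1) (2*k+2) (by omega) (by omega) (by omega)]
    simp
  · intro j hj hjk
    rw [Finset.mem_Icc] at hj
    rw [map_add, map_smul, map_smul,
      coordL_X_ne p (2*k+1) (2*j+1) (by omega) (by omega) (by omega),
      coordL_X_ne p (2*k+1) (2*j+2) (by omega) (by omega) (by omega)]
    simp

lemma comb_coord_even (c1 c2 : ℂ) (a b : ℕ → ℂ) {k : ℕ} (hk : k ∈ Icc 1 (p-1)) :
    coordL p (2*k+2) (comb p c1 c2 a b) = b k := by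
  rw [Finset.mem_Icc] at hk
  rw [comb, map_add, map_add, map_smul, map_smul, map_sum]
  rw [coordL_X_ne p (2*k+2) 1 (by omega) (by omega) (by omega),
    coordL_X_ne p (2*k+2) 2 (by omega) (by omega) (by omega)]
  rw [Finset.sum_eq_single_of_mem k (Finset.mem_Icc.mpr (by omega))]
  · rw [map_add, map_smul, map_smul, coordL_X_eq p (2*k+2) (by omega) (by omega),
      coordL_X_ne p (2*k+2) (2*k+1) (by omega) (by omega) (by omega)]
    simp
  · intro j hj hjk
    rw [Finset.mem_Icc] at hj
    rw [map_add, map_smul, map_smul,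
      coordL_X_ne p (2*k+2) (2*j+1) (by omega) (by omega) (by omega),
      coordL_X_ne p (2*k+2) (2*j+2) (by omega) (by omega) (by omega)]
    simp

lemma comb_congr {c1 c2 c1' c2' : ℂ} {a b a' b' : ℕ → ℂ} (h1 : c1 = c1') (h2 : c2 = c2')
    (ha : ∀ k ∈ Icc 1 (p-1), a k = a' k) (hb : ∀ k ∈ Icc 1 (p-1), b k = b' k) :
    comb p c1 c2 a b = comb p c1' c2' a' b' := by
  rw [comb, comb, h1, h2, Finset.sum_congr rfl (fun k hk => by rw [ha k hk, hb k hk])]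

lemma comb_add (c1 c2 d1 d2 : ℂ) (a b e f : ℕ → ℂ) :
    comb p c1 c2 a b + comb p d1 d2 e f
      = comb p (c1+d1) (c2+d2) (fun k => a k + e k) (fun k => b k + f k) := by
  have h : ∑ k ∈ Icc 1 (p-1), ((a k + e k) • X p (2*k+1) + (b k + f k) • X p (2*k+2))
      = ∑ k ∈ Icc 1 (p-1), (a k • X p (2*k+1) + b k • X p (2*k+2))
        + ∑ k ∈ Icc 1 (p-1), (e k • X p (2*k+1) + f k • X p (2*k+2)) := by
    rw [← Finset.sum_add_distrib]
    exact Finset.sum_congr rfl (fun k hk => by module)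
  rw [comb, comb, comb, h]
  module

/-- Reconstruction of a vector from its coordinates. -/
lemma recon (v : V p) :
    v = comb p (coordL p 1 v) (coordL p 2 v)
        (fun k => coordL p (2*k+1) v) (fun k => coordL p (2*k+2) v) := by
  funext i
  rcases i with ⟨n, hn⟩
  rw [comb]
  simp only [Pi.add_apply, Pi.smul_apply, Finset.sum_apply, smul_eq_mul, X]
  show v ⟨n, hn⟩ = coordL p 1 v * (if n + 1 = 1 then 1 else 0)
      + coordL p 2 v * (if n + 1 = 2 then 1 else 0)
      + ∑ k ∈ Icc 1 (p-1), (coordL p (2*k+1) v * (if n + 1 = 2*k+1 then 1 else 0)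
          + coordL p (2*k+2) v * (if n + 1 = 2*k+2 then 1 else 0))
  rcases Nat.lt_or_ge n 2 with h2 | h2
  · interval_cases n
    · rw [if_pos rfl, if_neg (by omega), Finset.sum_eq_zero (fun k hk => by
        rw [Finset.mem_Icc] at hk
        rw [if_neg (by omega), if_neg (by omega)]; ring)]
      rw [coordL_apply p 1 (by omega) (by omega)]
      simp
    · rw [if_neg (by omega), if_pos rfl, Finset.sum_eq_zero (fun k hk => by
        rw [Finset.mem_Icc] at hk
        rw [if_neg (by omega), if_neg (by omega)]; ring)]
      rw [coordL_apply p 2 (by omega) (by omega)]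
      simp
  · rcases Nat.even_or_odd n with ⟨m, hm⟩ | ⟨m, hm⟩
    · -- n = 2m, n+1 = 2m+1, m ∈ Icc 1 (p-1)
      rw [if_neg (by omega), if_neg (by omega),
        Finset.sum_eq_single_of_mem m (Finset.mem_Icc.mpr (by omega))
          (fun j hj hjm => by
            rw [Finset.mem_Icc] at hj
            rw [if_neg (by omega), if_neg (by omega)]; ring)]
      rw [if_pos (by omega), if_neg (by omega)]
      rw [coordL_apply p (2*m+1) (by omega) (by omega)]
      have : (⟨2*m+1-1, by omega⟩ : Fin (2*p)) = ⟨n, hn⟩ := by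
        apply Fin.ext; simp; omega
      rw [this]; ring
    · -- n = 2m+1, n+1 = 2m+2, m ∈ Icc 1 (p-1)
      rw [if_neg (by omega), if_neg (by omega),
        Finset.sum_eq_single_of_mem m (Finset.mem_Icc.mpr (by omega))
          (fun j hj hjm => by
            rw [Finset.mem_Icc] at hj
            rw [if_neg (by omega), if_neg (by omega)]; ring)]
      rw [if_neg (by omega), if_pos (by omega)]
      rw [coordL_apply p (2*m+2) (by omega) (by omega)]
      have : (⟨2*m+2-1, by omega⟩ : Fin (2*p)) = ⟨n, hn⟩ := by
        apply Fin.ext; simp; omega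
      rw [this]; ring

end

lemma elem_apply (p a b : ℕ) (v : V p) (x y : V p) :
    elem p a b v x y = (coordL p a x * coordL p b y - coordL p b x * coordL p a y) • v := by
  simp [elem, smul_smul, sub_smul]

/-- The canonical form of `mu`. -/
lemma mu_eq {p : ℕ} (hp : 2 ≤ p) (φ : ℕ → ℂ) (x y : V p) :
    mu p φ x y = comb p (C1 p x y) 0 (fun k => Co p φ k x y) (fun k => Ce p φ k x y) := by
  rw [mu]
  simp only [LinearMap.add_apply, LinearMap.sum_apply, elem_apply]
  rw [Finset.sum_congr rfl (fun k hk =>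
    show _ = (-(coordL p (2*k+1) x * coordL p (2*k+2) y
          - coordL p (2*k+2) x * coordL p (2*k+1) y)) • X p 1
        + (Co p φ k x y • X p (2*k+1) + Ce p φ k x y • X p (2*k+2)) from by
      rw [Co, Ce]; match_scalars <;> ring)]
  rw [Finset.sum_add_distrib, ← Finset.sum_smul, Finset.sum_neg_distrib, comb, C1]
  match_scalars <;> ring

section

variable {p : ℕ} (hp : 2 ≤ p) (φ : ℕ → ℂ)

include hp

lemma coordL_mu_one (x y : V p) : coordL p 1 (mu p φ x y) = C1 p x y := by
  rw [mu_eq hp, comb_coord_one hp]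

lemma coordL_mu_two (x y : V p) : coordL p 2 (mu p φ x y) = 0 := by
  rw [mu_eq hp, comb_coord_two hp]

lemma coordL_mu_odd {k : ℕ} (hk : k ∈ Icc 1 (p-1)) (x y : V p) :
    coordL p (2*k+1) (mu p φ x y) = Co p φ k x y := by
  rw [mu_eq hp, comb_coord_odd hp _ _ _ _ hk]

lemma coordL_mu_even {k : ℕ} (hk : k ∈ Icc 1 (p-1)) (x y : V p) :
    coordL p (2*k+2) (mu p φ x y) = Ce p φ k x y := by
  rw [mu_eq hp, comb_coord_even hp _ _ _ _ hk]

end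

section

variable {p : ℕ} (hp : 2 ≤ p) (φ : ℕ → ℂ)

include hp

lemma C1X1r (v : V p) : C1 p v (X p 1) = coordL p 2 v := by
  rw [C1, coordL_X_eq p 1 (by omega) (by omega),
    coordL_X_ne p 2 1 (by omega) (by omega) (by omega),
    Finset.sum_eq_zero (fun k hk => by
      rw [Finset.mem_Icc] at hk
      rw [coordL_X_ne p (2*k+2) 1 (by omega) (by omega) (by omega),
        coordL_X_ne p (2*k+1) 1 (by omega) (by omega) (by omega)]; ring)]
  ring

lemma C1X2r (v : V p) : C1 p v (X p 2) = -(coordL p 1 v) := by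
  rw [C1, coordL_X_eq p 2 (by omega) (by omega),
    coordL_X_ne p 1 2 (by omega) (by omega) (by omega),
    Finset.sum_eq_zero (fun k hk => by
      rw [Finset.mem_Icc] at hk
      rw [coordL_X_ne p (2*k+2) 2 (by omega) (by omega) (by omega),
        coordL_X_ne p (2*k+1) 2 (by omega) (by omega) (by omega)]; ring)]
  ring

lemma C1X2l (v : V p) : C1 p (X p 2) v = coordL p 1 v := by
  rw [C1, coordL_X_eq p 2 (by omega) (by omega),
    coordL_X_ne p 1 2 (by omega) (by omega) (by omega),
    Finset.sum_eq_zero (fun k hk => by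
      rw [Finset.mem_Icc] at hk
      rw [coordL_X_ne p (2*k+2) 2 (by omega) (by omega) (by omega),
        coordL_X_ne p (2*k+1) 2 (by omega) (by omega) (by omega)]; ring)]
  ring

lemma C1Xor {k : ℕ} (hk : k ∈ Icc 1 (p-1)) (v : V p) :
    C1 p v (X p (2*k+1)) = coordL p (2*k+2) v := by
  rw [Finset.mem_Icc] at hk
  rw [C1, coordL_X_ne p 1 (2*k+1) (by omega) (by omega) (by omega),
    coordL_X_ne p 2 (2*k+1) (by omega) (by omega) (by omega),
    Finset.sum_eq_single_of_mem k (Finset.mem_Icc.mpr (by omega)) (fun j hj hjk => by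
      rw [Finset.mem_Icc] at hj
      rw [coordL_X_ne p (2*j+2) (2*k+1) (by omega) (by omega) (by omega),
        coordL_X_ne p (2*j+1) (2*k+1) (by omega) (by omega) (by omega)]; ring),
    coordL_X_eq p (2*k+1) (by omega) (by omega),
    coordL_X_ne p (2*k+2) (2*k+1) (by omega) (by omega) (by omega)]
  ring

lemma C1Xer {k : ℕ} (hk : k ∈ Icc 1 (p-1)) (v : V p) :
    C1 p v (X p (2*k+2)) = -(coordL p (2*k+1) v) := by
  rw [Finset.mem_Icc] at hk
  rw [C1, coordL_X_ne p 1 (2*k+2) (by omega) (by omega) (by omega),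
    coordL_X_ne p 2 (2*k+2) (by omega) (by omega) (by omega),
    Finset.sum_eq_single_of_mem k (Finset.mem_Icc.mpr (by omega)) (fun j hj hjk => by
      rw [Finset.mem_Icc] at hj
      rw [coordL_X_ne p (2*j+2) (2*k+2) (by omega) (by omega) (by omega),
        coordL_X_ne p (2*j+1) (2*k+2) (by omega) (by omega) (by omega)]; ring),
    coordL_X_eq p (2*k+2) (by omega) (by omega),
    coordL_X_ne p (2*k+1) (2*k+2) (by omega) (by omega) (by omega)]
  ring

lemma C1Xol {k : ℕ} (hk : k ∈ Icc 1 (p-1)) (v : V p) :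
    C1 p (X p (2*k+1)) v = -(coordL p (2*k+2) v) := by
  rw [Finset.mem_Icc] at hk
  rw [C1, coordL_X_ne p 1 (2*k+1) (by omega) (by omega) (by omega),
    coordL_X_ne p 2 (2*k+1) (by omega) (by omega) (by omega),
    Finset.sum_eq_single_of_mem k (Finset.mem_Icc.mpr (by omega)) (fun j hj hjk => by
      rw [Finset.mem_Icc] at hj
      rw [coordL_X_ne p (2*j+2) (2*k+1) (by omega) (by omega) (by omega),
        coordL_X_ne p (2*j+1) (2*k+1) (by omega) (by omega) (by omega)]; ring),
    coordL_X_eq p (2*k+1) (by omega) (by omega),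
    coordL_X_ne p (2*k+2) (2*k+1) (by omega) (by omega) (by omega)]
  ring

lemma CoX1r {j : ℕ} (hj : j ∈ Icc 1 (p-1)) (v : V p) : Co p φ j v (X p 1) = 0 := by
  rw [Finset.mem_Icc] at hj
  rw [Co, coordL_X_ne p (2*j+1) 1 (by omega) (by omega) (by omega),
    coordL_X_ne p 2 1 (by omega) (by omega) (by omega)]
  ring

lemma CeX1r {j : ℕ} (hj : j ∈ Icc 1 (p-1)) (v : V p) : Ce p φ j v (X p 1) = 0 := by
  rw [Finset.mem_Icc] at hj
  rw [Ce, coordL_X_ne p (2*j+2) 1 (by omega) (by omega) (by omega),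
    coordL_X_ne p 2 1 (by omega) (by omega) (by omega)]
  ring

lemma CoX2r {j : ℕ} (hj : j ∈ Icc 1 (p-1)) (v : V p) :
    Co p φ j v (X p 2) = φ j * coordL p (2*j+1) v := by
  rw [Finset.mem_Icc] at hj
  rw [Co, coordL_X_ne p (2*j+1) 2 (by omega) (by omega) (by omega),
    coordL_X_eq p 2 (by omega) (by omega)]
  ring

lemma CeX2r {j : ℕ} (hj : j ∈ Icc 1 (p-1)) (v : V p) :
    Ce p φ j v (X p 2) = -((1 + φ j) * coordL p (2*j+2) v) := by
  rw [Finset.mem_Icc] at hj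
  rw [Ce, coordL_X_ne p (2*j+2) 2 (by omega) (by omega) (by omega),
    coordL_X_eq p 2 (by omega) (by omega)]
  ring

lemma CoX2l {j : ℕ} (hj : j ∈ Icc 1 (p-1)) (v : V p) :
    Co p φ j (X p 2) v = -(φ j) * coordL p (2*j+1) v := by
  rw [Finset.mem_Icc] at hj
  rw [Co, coordL_X_ne p (2*j+1) 2 (by omega) (by omega) (by omega),
    coordL_X_eq p 2 (by omega) (by omega)]
  ring

lemma CeX2l {j : ℕ} (hj : j ∈ Icc 1 (p-1)) (v : V p) :
    Ce p φ j (X p 2) v = (1 + φ j) * coordL p (2*j+2) v := by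
  rw [Finset.mem_Icc] at hj
  rw [Ce, coordL_X_ne p (2*j+2) 2 (by omega) (by omega) (by omega),
    coordL_X_eq p 2 (by omega) (by omega)]
  ring

lemma CoXor {j k : ℕ} (hj : j ∈ Icc 1 (p-1)) (hk : k ∈ Icc 1 (p-1)) (v : V p) :
    Co p φ j v (X p (2*k+1)) = if j = k then -(φ j) * coordL p 2 v else 0 := by
  rw [Finset.mem_Icc] at hj hk
  by_cases h : j = k
  · subst h
    rw [if_pos rfl, Co, coordL_X_eq p (2*j+1) (by omega) (by omega),
      coordL_X_ne p 2 (2*j+1) (by omega) (by omega) (by omega)]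
    ring
  · rw [if_neg h, Co, coordL_X_ne p (2*j+1) (2*k+1) (by omega) (by omega) (by omega),
      coordL_X_ne p 2 (2*k+1) (by omega) (by omega) (by omega)]
    ring

lemma CeXor {j k : ℕ} (hj : j ∈ Icc 1 (p-1)) (hk : k ∈ Icc 1 (p-1)) (v : V p) :
    Ce p φ j v (X p (2*k+1)) = 0 := by
  rw [Finset.mem_Icc] at hj hk
  rw [Ce, coordL_X_ne p (2*j+2) (2*k+1) (by omega) (by omega) (by omega),
    coordL_X_ne p 2 (2*k+1) (by omega) (by omega) (by omega)]
  ring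

lemma CoXer {j k : ℕ} (hj : j ∈ Icc 1 (p-1)) (hk : k ∈ Icc 1 (p-1)) (v : V p) :
    Co p φ j v (X p (2*k+2)) = 0 := by
  rw [Finset.mem_Icc] at hj hk
  rw [Co, coordL_X_ne p (2*j+1) (2*k+2) (by omega) (by omega) (by omega),
    coordL_X_ne p 2 (2*k+2) (by omega) (by omega) (by omega)]
  ring

lemma CeXer {j k : ℕ} (hj : j ∈ Icc 1 (p-1)) (hk : k ∈ Icc 1 (p-1)) (v : V p) :
    Ce p φ j v (X p (2*k+2)) = if j = k then (1 + φ j) * coordL p 2 v else 0 := by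
  rw [Finset.mem_Icc] at hj hk
  by_cases h : j = k
  · subst h
    rw [if_pos rfl, Ce, coordL_X_eq p (2*j+2) (by omega) (by omega),
      coordL_X_ne p 2 (2*j+2) (by omega) (by omega) (by omega)]
    ring
  · rw [if_neg h, Ce, coordL_X_ne p (2*j+2) (2*k+2) (by omega) (by omega) (by omega),
      coordL_X_ne p 2 (2*k+2) (by omega) (by omega) (by omega)]
    ring

omit hp in
lemma comb_X1 (c : ℂ) : comb p c 0 (fun _ => 0) (fun _ => 0) = c • X p 1 := by
  simp [comb]

omit hp in
lemma comb_delta_odd {k : ℕ} (hk : k ∈ Icc 1 (p-1)) (c : ℂ) :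
    comb p 0 0 (fun j => if j = k then c else 0) (fun _ => 0) = c • X p (2*k+1) := by
  rw [comb, Finset.sum_eq_single_of_mem k hk (fun j hj hjk => by rw [if_neg hjk]; simp)]
  simp

omit hp in
lemma comb_delta_even {k : ℕ} (hk : k ∈ Icc 1 (p-1)) (c : ℂ) :
    comb p 0 0 (fun _ => 0) (fun j => if j = k then c else 0) = c • X p (2*k+2) := by
  rw [comb, Finset.sum_eq_single_of_mem k hk (fun j hj hjk => by rw [if_neg hjk]; simp)]
  simp

lemma mu_v_X1 (v : V p) : mu p φ v (X p 1) = coordL p 2 v • X p 1 := by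
  rw [mu_eq hp, comb_congr hp (C1X1r hp v) rfl
    (fun k hk => CoX1r hp φ hk v) (fun k hk => CeX1r hp φ hk v), comb_X1]

lemma mu_X2_X1 : mu p φ (X p 2) (X p 1) = X p 1 := by
  rw [mu_v_X1 hp, coordL_X_eq p 2 (by omega) (by omega), one_smul]

lemma mu_X1_X2 : mu p φ (X p 1) (X p 2) = (-1 : ℂ) • X p 1 := by
  rw [mu_eq hp, comb_congr hp
    (show C1 p (X p 1) (X p 2) = -1 from by
      rw [C1X2r hp, coordL_X_eq p 1 (by omega) (by omega)])
    rfl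
    (fun k hk => show Co p φ k (X p 1) (X p 2) = 0 from by
      rw [CoX2r hp φ hk]
      rw [Finset.mem_Icc] at hk
      rw [coordL_X_ne p (2*k+1) 1 (by omega) (by omega) (by omega)]; ring)
    (fun k hk => show Ce p φ k (X p 1) (X p 2) = 0 from by
      rw [CeX2r hp φ hk]
      rw [Finset.mem_Icc] at hk
      rw [coordL_X_ne p (2*k+2) 1 (by omega) (by omega) (by omega)]; ring),
    comb_X1]

lemma mu_X2_Xo {k : ℕ} (hk : k ∈ Icc 1 (p-1)) :
    mu p φ (X p 2) (X p (2*k+1)) = (-(φ k)) • X p (2*k+1) := by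
  rw [mu_eq hp, comb_congr hp
    (show C1 p (X p 2) (X p (2*k+1)) = 0 from by
      rw [C1Xor hp hk]
      rw [Finset.mem_Icc] at hk
      rw [coordL_X_ne p (2*k+2) 2 (by omega) (by omega) (by omega)])
    rfl
    (fun j hj => show Co p φ j (X p 2) (X p (2*k+1)) = if j = k then -(φ k) else 0 from by
      rw [CoXor hp φ hj hk, coordL_X_eq p 2 (by omega) (by omega)]
      split_ifs with h
      · subst h; ring
      · rfl)
    (fun j hj => CeXor hp φ hj hk _),
    comb_delta_odd hk]

lemma mu_X2_Xe {k : ℕ} (hk : k ∈ Icc 1 (p-1)) :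
    mu p φ (X p 2) (X p (2*k+2)) = (1 + φ k) • X p (2*k+2) := by
  rw [mu_eq hp, comb_congr hp
    (show C1 p (X p 2) (X p (2*k+2)) = 0 from by
      rw [C1Xer hp hk]
      rw [Finset.mem_Icc] at hk
      rw [coordL_X_ne p (2*k+1) 2 (by omega) (by omega) (by omega)]; ring)
    rfl
    (fun j hj => CoXer hp φ hj hk _)
    (fun j hj => show Ce p φ j (X p 2) (X p (2*k+2)) = if j = k then (1 + φ k) else 0 from by
      rw [CeXer hp φ hj hk, coordL_X_eq p 2 (by omega) (by omega)]
      split_ifs with h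
      · subst h; ring
      · rfl),
    comb_delta_even hk]

lemma mu_Xo_Xe {k : ℕ} (hk : k ∈ Icc 1 (p-1)) :
    mu p φ (X p (2*k+1)) (X p (2*k+2)) = (-1 : ℂ) • X p 1 := by
  have hk' := Finset.mem_Icc.mp hk
  rw [mu_eq hp, comb_congr hp
    (show C1 p (X p (2*k+1)) (X p (2*k+2)) = -1 from by
      rw [C1Xer hp hk, coordL_X_eq p (2*k+1) (by omega) (by omega)])
    rfl
    (fun j hj => CoXer hp φ hj hk _)
    (fun j hj => show Ce p φ j (X p (2*k+1)) (X p (2*k+2)) = 0 from by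
      rw [CeXer hp φ hj hk]
      split_ifs with h
      · rw [coordL_X_ne p 2 (2*k+1) (by omega) (by omega) (by omega)]; ring
      · rfl),
    comb_X1]

lemma mu_nil {x y : V p} (hx : coordL p 2 x = 0) (hy : coordL p 2 y = 0) :
    mu p φ x y = (C1 p x y) • X p 1 := by
  rw [mu_eq hp, comb_congr hp rfl rfl
    (fun k hk => show Co p φ k x y = 0 from by rw [Co, hx, hy]; ring)
    (fun k hk => show Ce p φ k x y = 0 from by rw [Ce, hx, hy]; ring),
    comb_X1]

omit hp in
lemma fDer_apply (k : ℕ) (v : V p) :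
    fDer p k v = coordL p (2*k+1) v • X p (2*k+1) - coordL p (2*k+2) v • X p (2*k+2) := by
  simp [fDer]

lemma coordL_fder_one {k : ℕ} (hk : k ∈ Icc 1 (p-1)) (v : V p) :
    coordL p 1 (fDer p k v) = 0 := by
  rw [Finset.mem_Icc] at hk
  rw [fDer_apply, map_sub, map_smul, map_smul,
    coordL_X_ne p 1 (2*k+1) (by omega) (by omega) (by omega),
    coordL_X_ne p 1 (2*k+2) (by omega) (by omega) (by omega)]
  simp

lemma coordL_fder_two {k : ℕ} (hk : k ∈ Icc 1 (p-1)) (v : V p) :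
    coordL p 2 (fDer p k v) = 0 := by
  rw [Finset.mem_Icc] at hk
  rw [fDer_apply, map_sub, map_smul, map_smul,
    coordL_X_ne p 2 (2*k+1) (by omega) (by omega) (by omega),
    coordL_X_ne p 2 (2*k+2) (by omega) (by omega) (by omega)]
  simp

lemma coordL_fder_odd {j k : ℕ} (hj : j ∈ Icc 1 (p-1)) (hk : k ∈ Icc 1 (p-1)) (v : V p) :
    coordL p (2*j+1) (fDer p k v) = if j = k then coordL p (2*j+1) v else 0 := by
  rw [Finset.mem_Icc] at hj hk
  by_cases h : j = k
  · subst h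
    rw [if_pos rfl, fDer_apply, map_sub, map_smul, map_smul,
      coordL_X_eq p (2*j+1) (by omega) (by omega),
      coordL_X_ne p (2*j+1) (2*j+2) (by omega) (by omega) (by omega)]
    simp
  · rw [if_neg h, fDer_apply, map_sub, map_smul, map_smul,
      coordL_X_ne p (2*j+1) (2*k+1) (by omega) (by omega) (by omega),
      coordL_X_ne p (2*j+1) (2*k+2) (by omega) (by omega) (by omega)]
    simp

lemma coordL_fder_even {j k : ℕ} (hj : j ∈ Icc 1 (p-1)) (hk : k ∈ Icc 1 (p-1)) (v : V p) :
    coordL p (2*j+2) (fDer p k v) = if j = k then -(coordL p (2*j+2) v) else 0 := by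
  rw [Finset.mem_Icc] at hj hk
  by_cases h : j = k
  · subst h
    rw [if_pos rfl, fDer_apply, map_sub, map_smul, map_smul,
      coordL_X_eq p (2*j+2) (by omega) (by omega),
      coordL_X_ne p (2*j+2) (2*j+1) (by omega) (by omega) (by omega)]
    simp
  · rw [if_neg h, fDer_apply, map_sub, map_smul, map_smul,
      coordL_X_ne p (2*j+2) (2*k+1) (by omega) (by omega) (by omega),
      coordL_X_ne p (2*j+2) (2*k+2) (by omega) (by omega) (by omega)]
    simp

lemma fDer_X1 {k : ℕ} (hk : k ∈ Icc 1 (p-1)) : fDer p k (X p 1) = 0 := by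
  rw [Finset.mem_Icc] at hk
  rw [fDer_apply,
    coordL_X_ne p (2*k+1) 1 (by omega) (by omega) (by omega),
    coordL_X_ne p (2*k+2) 1 (by omega) (by omega) (by omega)]
  simp

lemma fDer_X2 {k : ℕ} (hk : k ∈ Icc 1 (p-1)) : fDer p k (X p 2) = 0 := by
  rw [Finset.mem_Icc] at hk
  rw [fDer_apply,
    coordL_X_ne p (2*k+1) 2 (by omega) (by omega) (by omega),
    coordL_X_ne p (2*k+2) 2 (by omega) (by omega) (by omega)]
  simp

lemma fDer_Xo {j k : ℕ} (hj : j ∈ Icc 1 (p-1)) (hk : k ∈ Icc 1 (p-1)) :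
    fDer p j (X p (2*k+1)) = if j = k then X p (2*k+1) else 0 := by
  rw [Finset.mem_Icc] at hj hk
  by_cases h : j = k
  · subst h
    rw [if_pos rfl, fDer_apply, coordL_X_eq p (2*j+1) (by omega) (by omega),
      coordL_X_ne p (2*j+2) (2*j+1) (by omega) (by omega) (by omega)]
    simp
  · rw [if_neg h, fDer_apply,
      coordL_X_ne p (2*j+1) (2*k+1) (by omega) (by omega) (by omega),
      coordL_X_ne p (2*j+2) (2*k+1) (by omega) (by omega) (by omega)]
    simp

lemma fDer_Xe {j k : ℕ} (hj : j ∈ Icc 1 (p-1)) (hk : k ∈ Icc 1 (p-1)) :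
    fDer p j (X p (2*k+2)) = if j = k then -(X p (2*k+2)) else 0 := by
  rw [Finset.mem_Icc] at hj hk
  by_cases h : j = k
  · subst h
    rw [if_pos rfl, fDer_apply, coordL_X_eq p (2*j+2) (by omega) (by omega),
      coordL_X_ne p (2*j+1) (2*j+2) (by omega) (by omega) (by omega)]
    simp
  · rw [if_neg h, fDer_apply,
      coordL_X_ne p (2*j+1) (2*k+2) (by omega) (by omega) (by omega),
      coordL_X_ne p (2*j+2) (2*k+2) (by omega) (by omega) (by omega)]
    simp

lemma C1_fder_l {k : ℕ} (hk : k ∈ Icc 1 (p-1)) (x y : V p) :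
    C1 p (fDer p k x) y
      = -(coordL p (2*k+1) x * coordL p (2*k+2) y + coordL p (2*k+2) x * coordL p (2*k+1) y) := by
  rw [C1, coordL_fder_one hp hk, coordL_fder_two hp hk,
    Finset.sum_eq_single_of_mem k hk (fun j hj hjk => by
      rw [coordL_fder_odd hp hj hk, coordL_fder_even hp hj hk, if_neg hjk, if_neg hjk]; ring),
    coordL_fder_odd hp hk hk, coordL_fder_even hp hk hk, if_pos rfl, if_pos rfl]
  ring

lemma C1_fder_r {k : ℕ} (hk : k ∈ Icc 1 (p-1)) (x y : V p) :
    C1 p x (fDer p k y)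
      = coordL p (2*k+1) x * coordL p (2*k+2) y + coordL p (2*k+2) x * coordL p (2*k+1) y := by
  rw [C1, coordL_fder_one hp hk, coordL_fder_two hp hk,
    Finset.sum_eq_single_of_mem k hk (fun j hj hjk => by
      rw [coordL_fder_odd hp hj hk, coordL_fder_even hp hj hk, if_neg hjk, if_neg hjk]; ring),
    coordL_fder_odd hp hk hk, coordL_fder_even hp hk hk, if_pos rfl, if_pos rfl]
  ring

lemma Co_fder_l {j k : ℕ} (hj : j ∈ Icc 1 (p-1)) (hk : k ∈ Icc 1 (p-1)) (x y : V p) :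
    Co p φ j (fDer p k x) y
      = if j = k then φ j * (coordL p (2*j+1) x * coordL p 2 y) else 0 := by
  rw [Co, coordL_fder_two hp hk, coordL_fder_odd hp hj hk]
  split_ifs with h <;> ring

lemma Co_fder_r {j k : ℕ} (hj : j ∈ Icc 1 (p-1)) (hk : k ∈ Icc 1 (p-1)) (x y : V p) :
    Co p φ j x (fDer p k y)
      = if j = k then -(φ j) * (coordL p 2 x * coordL p (2*j+1) y) else 0 := by
  rw [Co, coordL_fder_two hp hk, coordL_fder_odd hp hj hk]
  split_ifs with h <;> ring

lemma Ce_fder_l {j k : ℕ} (hj : j ∈ Icc 1 (p-1)) (hk : k ∈ Icc 1 (p-1)) (x y : V p) :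
    Ce p φ j (fDer p k x) y
      = if j = k then (1 + φ j) * (coordL p (2*j+2) x * coordL p 2 y) else 0 := by
  rw [Ce, coordL_fder_two hp hk, coordL_fder_even hp hj hk]
  split_ifs with h <;> ring

lemma Ce_fder_r {j k : ℕ} (hj : j ∈ Icc 1 (p-1)) (hk : k ∈ Icc 1 (p-1)) (x y : V p) :
    Ce p φ j x (fDer p k y)
      = if j = k then -((1 + φ j) * (coordL p 2 x * coordL p (2*j+2) y)) else 0 := by
  rw [Ce, coordL_fder_two hp hk, coordL_fder_even hp hj hk]
  split_ifs with h <;> ring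

end

section

variable {p : ℕ} (hp : 2 ≤ p) (φ : ℕ → ℂ)

include hp

omit hp in
lemma comb_delta {k : ℕ} (hk : k ∈ Icc 1 (p-1)) (c d : ℂ) :
    comb p 0 0 (fun j => if j = k then c else 0) (fun j => if j = k then d else 0)
      = c • X p (2*k+1) + d • X p (2*k+2) := by
  rw [comb, Finset.sum_eq_single_of_mem k hk (fun j hj hjk => by
    rw [if_neg hjk, if_neg hjk]; simp)]
  simp

/-- `fDer k` is a derivation of `mu`. -/
lemma fder_der {k : ℕ} (hk : k ∈ Icc 1 (p-1)) (x y : V p) :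
    fDer p k (mu p φ x y) = mu p φ (fDer p k x) y + mu p φ x (fDer p k y) := by
  have lhs : fDer p k (mu p φ x y)
      = comb p 0 0 (fun j => if j = k then Co p φ k x y else 0)
          (fun j => if j = k then -(Ce p φ k x y) else 0) := by
    rw [fDer_apply, coordL_mu_odd hp φ hk, coordL_mu_even hp φ hk, comb_delta hk]
    module
  rw [lhs, mu_eq hp φ (fDer p k x) y, mu_eq hp φ x (fDer p k y), comb_add hp]
  refine comb_congr hp ?_ ?_ ?_ ?_
  · rw [C1_fder_l hp hk, C1_fder_r hp hk]; ring
  · ring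
  · intro j hj
    rw [Co_fder_l hp φ hj hk, Co_fder_r hp φ hj hk, Co]
    split_ifs with h
    · subst h; ring
    · ring
  · intro j hj
    rw [Ce_fder_l hp φ hj hk, Ce_fder_r hp φ hj hk, Ce]
    split_ifs with h
    · subst h; ring
    · ring

/-- The Jacobi identity for `mu` (in Leibniz form). -/
lemma jacobi (x y z : V p) :
    mu p φ x (mu p φ y z) = mu p φ (mu p φ x y) z + mu p φ y (mu p φ x z) := by
  rw [mu_eq hp φ x (mu p φ y z), mu_eq hp φ (mu p φ x y) z, mu_eq hp φ y (mu p φ x z), comb_add hp]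
  refine comb_congr hp ?_ ?_ ?_ ?_
  · -- C1 component
    have hs1 : ∑ k ∈ Icc 1 (p-1), (coordL p (2*k+1) x * coordL p (2*k+2) (mu p φ y z)
          - coordL p (2*k+2) x * coordL p (2*k+1) (mu p φ y z))
        = ∑ k ∈ Icc 1 (p-1), (coordL p (2*k+1) x * Ce p φ k y z
          - coordL p (2*k+2) x * Co p φ k y z) :=
      Finset.sum_congr rfl (fun k hk => by rw [coordL_mu_odd hp φ hk, coordL_mu_even hp φ hk])
    have hs2 : ∑ k ∈ Icc 1 (p-1), (coordL p (2*k+1) (mu p φ x y) * coordL p (2*k+2) z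
          - coordL p (2*k+2) (mu p φ x y) * coordL p (2*k+1) z)
        = ∑ k ∈ Icc 1 (p-1), (Co p φ k x y * coordL p (2*k+2) z
          - Ce p φ k x y * coordL p (2*k+1) z) :=
      Finset.sum_congr rfl (fun k hk => by rw [coordL_mu_odd hp φ hk, coordL_mu_even hp φ hk])
    have hs3 : ∑ k ∈ Icc 1 (p-1), (coordL p (2*k+1) y * coordL p (2*k+2) (mu p φ x z)
          - coordL p (2*k+2) y * coordL p (2*k+1) (mu p φ x z))
        = ∑ k ∈ Icc 1 (p-1), (coordL p (2*k+1) y * Ce p φ k x z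
          - coordL p (2*k+2) y * Co p φ k x z) :=
      Finset.sum_congr rfl (fun k hk => by rw [coordL_mu_odd hp φ hk, coordL_mu_even hp φ hk])
    simp only [C1]
    rw [hs1, hs2, hs3, coordL_mu_one hp φ, coordL_mu_one hp φ, coordL_mu_one hp φ,
      coordL_mu_two hp φ, coordL_mu_two hp φ, coordL_mu_two hp φ]
    simp only [C1, Co, Ce]
    have key : -(coordL p 2 x * ∑ k ∈ Icc 1 (p-1), (coordL p (2*k+1) y * coordL p (2*k+2) z
            - coordL p (2*k+2) y * coordL p (2*k+1) z))
        - (∑ k ∈ Icc 1 (p-1), (coordL p (2*k+1) x * ((1 + φ k) * (coordL p 2 y * coordL p (2*k+2) z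
            - coordL p (2*k+2) y * coordL p 2 z))
          - coordL p (2*k+2) x * (-φ k * (coordL p 2 y * coordL p (2*k+1) z
            - coordL p (2*k+1) y * coordL p 2 z))))
        - (∑ k ∈ Icc 1 (p-1), (coordL p (2*k+1) x * coordL p (2*k+2) y
            - coordL p (2*k+2) x * coordL p (2*k+1) y)) * coordL p 2 z
        + (∑ k ∈ Icc 1 (p-1), (-φ k * (coordL p 2 x * coordL p (2*k+1) y
            - coordL p (2*k+1) x * coordL p 2 y) * coordL p (2*k+2) z
          - (1 + φ k) * (coordL p 2 x * coordL p (2*k+2) y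
            - coordL p (2*k+2) x * coordL p 2 y) * coordL p (2*k+1) z))
        + coordL p 2 y * (∑ k ∈ Icc 1 (p-1), (coordL p (2*k+1) x * coordL p (2*k+2) z
            - coordL p (2*k+2) x * coordL p (2*k+1) z))
        + (∑ k ∈ Icc 1 (p-1), (coordL p (2*k+1) y * ((1 + φ k) * (coordL p 2 x * coordL p (2*k+2) z
            - coordL p (2*k+2) x * coordL p 2 z))
          - coordL p (2*k+2) y * (-φ k * (coordL p 2 x * coordL p (2*k+1) z
            - coordL p (2*k+1) x * coordL p 2 z)))) = 0 := by
      rw [Finset.mul_sum, Finset.mul_sum, Finset.sum_mul, ← Finset.sum_neg_distrib,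
        ← Finset.sum_sub_distrib, ← Finset.sum_sub_distrib, ← Finset.sum_add_distrib,
        ← Finset.sum_add_distrib, ← Finset.sum_add_distrib]
      exact Finset.sum_eq_zero (fun k hk => by ring)
    linear_combination key
  · ring
  · intro k hk
    simp only [Co]
    rw [coordL_mu_odd hp φ hk, coordL_mu_odd hp φ hk, coordL_mu_odd hp φ hk,
      coordL_mu_two hp φ, coordL_mu_two hp φ, coordL_mu_two hp φ]
    simp only [Co]
    ring
  · intro k hk
    simp only [Ce]
    rw [coordL_mu_even hp φ hk, coordL_mu_even hp φ hk, coordL_mu_even hp φ hk,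
      coordL_mu_two hp φ, coordL_mu_two hp φ, coordL_mu_two hp φ]
    simp only [Ce]
    ring

end

section

variable {p : ℕ} (hp : 2 ≤ p) (φ : ℕ → ℂ)

include hp

lemma lie_mu_mu (w w' : V p) :
    ⁅mu p φ w, mu p φ w'⁆ = mu p φ (mu p φ w w') := by
  refine LinearMap.ext (fun v => ?_)
  simp only [Ring.lie_def, LinearMap.sub_apply, Module.End.mul_apply]
  linear_combination (norm := module) jacobi hp φ w w' v

lemma lie_f_mu {k : ℕ} (hk : k ∈ Icc 1 (p-1)) (w : V p) :
    ⁅fDer p k, mu p φ w⁆ = mu p φ (fDer p k w) := by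
  refine LinearMap.ext (fun v => ?_)
  simp only [Ring.lie_def, LinearMap.sub_apply, Module.End.mul_apply]
  linear_combination (norm := module) fder_der hp φ hk w v

lemma lie_f_f {j k : ℕ} (hj : j ∈ Icc 1 (p-1)) (hk : k ∈ Icc 1 (p-1)) :
    ⁅fDer p j, fDer p k⁆ = 0 := by
  refine LinearMap.ext (fun v => ?_)
  simp only [Ring.lie_def, LinearMap.sub_apply, Module.End.mul_apply, LinearMap.zero_apply]
  by_cases h : j = k
  · subst h; exact sub_self _
  · have e1 : fDer p j (fDer p k v) = 0 := by
      rw [fDer_apply k v, map_sub, map_smul, map_smul, fDer_Xo hp hj hk, fDer_Xe hp hj hk,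
        if_neg h, if_neg h]
      simp
    have e2 : fDer p k (fDer p j v) = 0 := by
      rw [fDer_apply j v, map_sub, map_smul, map_smul, fDer_Xo hp hk hj, fDer_Xe hp hk hj,
        if_neg (Ne.symm h), if_neg (Ne.symm h)]
      simp
    rw [e1, e2, sub_zero]

/-- Classification of the derivations of `F_φ`. -/
lemma classify (hΩ : AvoidsOmega1 p φ) (D : Module.End ℂ (V p))
    (hD : ∀ x y : V p, D (mu p φ x y) = mu p φ (D x) y + mu p φ x (D y)) :
    ∃ (w : V p) (c : ℕ → ℂ), D = mu p φ w + ∑ k ∈ Icc 1 (p-1), c k • fDer p k := by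
  have hφ0 : ∀ k ∈ Icc 1 (p-1), φ k ≠ 0 := fun k hk => by
    have hk' := Finset.mem_Icc.mp hk
    exact (hΩ k k hk'.1 hk'.2 hk'.1 hk'.2).2.2.2.1
  have hφ1 : ∀ k ∈ Icc 1 (p-1), 1 + φ k ≠ 0 := fun k hk => by
    have hk' := Finset.mem_Icc.mp hk
    have h := (hΩ k k hk'.1 hk'.2 hk'.1 hk'.2).2.2.2.2.1
    intro hc; exact h (by linear_combination hc)
  have hφd : ∀ j ∈ Icc 1 (p-1), ∀ k ∈ Icc 1 (p-1), j ≠ k → φ j ≠ φ k := fun j hj k hk hne => by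
    have hj' := Finset.mem_Icc.mp hj
    have hk' := Finset.mem_Icc.mp hk
    exact (hΩ j k hj'.1 hj'.2 hk'.1 hk'.2).2.2.1 hne
  have hφs : ∀ j ∈ Icc 1 (p-1), ∀ k ∈ Icc 1 (p-1), 1 + φ j + φ k ≠ 0 := fun j hj k hk => by
    have hj' := Finset.mem_Icc.mp hj
    have hk' := Finset.mem_Icc.mp hk
    exact (hΩ j k hj'.1 hj'.2 hk'.1 hk'.2).1
  -- relation from (X2, X1)
  have rel1 := hD (X p 2) (X p 1)
  rw [mu_X2_X1 hp φ] at rel1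
  have hbeta : coordL p 2 (D (X p 2)) = 0 := by
    have h := congrArg (coordL p 1) rel1
    rw [map_add, coordL_mu_one hp φ, coordL_mu_one hp φ, C1X1r hp, C1X2l hp] at h
    linear_combination -h
  have hD1_2 : coordL p 2 (D (X p 1)) = 0 := by
    have h := congrArg (coordL p 2) rel1
    rw [map_add, coordL_mu_two hp φ, coordL_mu_two hp φ] at h
    simpa using h
  have hD1_odd : ∀ k ∈ Icc 1 (p-1), coordL p (2*k+1) (D (X p 1)) = 0 := by
    intro k hk
    have h := congrArg (coordL p (2*k+1)) rel1
    rw [map_add, coordL_mu_odd hp φ hk, coordL_mu_odd hp φ hk, CoX1r hp φ hk,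
      CoX2l hp φ hk] at h
    have h2 : (1 + φ k) * coordL p (2*k+1) (D (X p 1)) = 0 := by linear_combination h
    exact (mul_eq_zero.mp h2).resolve_left (hφ1 k hk)
  have hD1_even : ∀ k ∈ Icc 1 (p-1), coordL p (2*k+2) (D (X p 1)) = 0 := by
    intro k hk
    have h := congrArg (coordL p (2*k+2)) rel1
    rw [map_add, coordL_mu_even hp φ hk, coordL_mu_even hp φ hk, CeX1r hp φ hk,
      CeX2l hp φ hk] at h
    have h2 : φ k * coordL p (2*k+2) (D (X p 1)) = 0 := by linear_combination -h
    exact (mul_eq_zero.mp h2).resolve_left (hφ0 k hk)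
  -- relations from (X2, X_{2k+1})
  have rel2 : ∀ k ∈ Icc 1 (p-1), (-(φ k)) • D (X p (2*k+1))
      = mu p φ (D (X p 2)) (X p (2*k+1)) + mu p φ (X p 2) (D (X p (2*k+1))) := by
    intro k hk
    have h := hD (X p 2) (X p (2*k+1))
    rw [mu_X2_Xo hp φ hk, map_smul] at h
    exact h
  have hDo_1 : ∀ k ∈ Icc 1 (p-1),
      coordL p 1 (D (X p (2*k+1))) = -(coordL p (2*k+2) (D (X p 2))) / (1 + φ k) := by
    intro k hk
    have h := congrArg (coordL p 1) (rel2 k hk)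
    rw [map_smul, map_add, coordL_mu_one hp φ, coordL_mu_one hp φ, C1Xor hp hk,
      C1X2l hp, smul_eq_mul] at h
    rw [eq_div_iff (hφ1 k hk)]
    linear_combination -h
  have hDo_2 : ∀ k ∈ Icc 1 (p-1), coordL p 2 (D (X p (2*k+1))) = 0 := by
    intro k hk
    have h := congrArg (coordL p 2) (rel2 k hk)
    rw [map_smul, map_add, coordL_mu_two hp φ, coordL_mu_two hp φ, smul_eq_mul] at h
    have h2 : φ k * coordL p 2 (D (X p (2*k+1))) = 0 := by linear_combination -h
    exact (mul_eq_zero.mp h2).resolve_left (hφ0 k hk)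
  have hDo_odd : ∀ k ∈ Icc 1 (p-1), ∀ j ∈ Icc 1 (p-1), j ≠ k →
      coordL p (2*j+1) (D (X p (2*k+1))) = 0 := by
    intro k hk j hj hne
    have h := congrArg (coordL p (2*j+1)) (rel2 k hk)
    rw [map_smul, map_add, coordL_mu_odd hp φ hj, coordL_mu_odd hp φ hj,
      CoXor hp φ hj hk, if_neg hne, CoX2l hp φ hj, smul_eq_mul] at h
    have h2 : (φ j - φ k) * coordL p (2*j+1) (D (X p (2*k+1))) = 0 := by linear_combination h
    exact (mul_eq_zero.mp h2).resolve_left (sub_ne_zero.mpr (hφd j hj k hk hne))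
  have hDo_even : ∀ k ∈ Icc 1 (p-1), ∀ j ∈ Icc 1 (p-1),
      coordL p (2*j+2) (D (X p (2*k+1))) = 0 := by
    intro k hk j hj
    have h := congrArg (coordL p (2*j+2)) (rel2 k hk)
    rw [map_smul, map_add, coordL_mu_even hp φ hj, coordL_mu_even hp φ hj,
      CeXor hp φ hj hk, CeX2l hp φ hj, smul_eq_mul] at h
    have h2 : (1 + φ j + φ k) * coordL p (2*j+2) (D (X p (2*k+1))) = 0 := by
      linear_combination -h
    exact (mul_eq_zero.mp h2).resolve_left (hφs j hj k hk)
  -- relations from (X2, X_{2k+2})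
  have rel3 : ∀ k ∈ Icc 1 (p-1), (1 + φ k) • D (X p (2*k+2))
      = mu p φ (D (X p 2)) (X p (2*k+2)) + mu p φ (X p 2) (D (X p (2*k+2))) := by
    intro k hk
    have h := hD (X p 2) (X p (2*k+2))
    rw [mu_X2_Xe hp φ hk, map_smul] at h
    exact h
  have hDe_1 : ∀ k ∈ Icc 1 (p-1),
      coordL p 1 (D (X p (2*k+2))) = -(coordL p (2*k+1) (D (X p 2))) / φ k := by
    intro k hk
    have h := congrArg (coordL p 1) (rel3 k hk)
    rw [map_smul, map_add, coordL_mu_one hp φ, coordL_mu_one hp φ, C1Xer hp hk,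
      C1X2l hp, smul_eq_mul] at h
    rw [eq_div_iff (hφ0 k hk)]
    linear_combination h
  have hDe_2 : ∀ k ∈ Icc 1 (p-1), coordL p 2 (D (X p (2*k+2))) = 0 := by
    intro k hk
    have h := congrArg (coordL p 2) (rel3 k hk)
    rw [map_smul, map_add, coordL_mu_two hp φ, coordL_mu_two hp φ, smul_eq_mul] at h
    have h2 : (1 + φ k) * coordL p 2 (D (X p (2*k+2))) = 0 := by linear_combination h
    exact (mul_eq_zero.mp h2).resolve_left (hφ1 k hk)
  have hDe_odd : ∀ k ∈ Icc 1 (p-1), ∀ j ∈ Icc 1 (p-1),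
      coordL p (2*j+1) (D (X p (2*k+2))) = 0 := by
    intro k hk j hj
    have h := congrArg (coordL p (2*j+1)) (rel3 k hk)
    rw [map_smul, map_add, coordL_mu_odd hp φ hj, coordL_mu_odd hp φ hj,
      CoXer hp φ hj hk, CoX2l hp φ hj, smul_eq_mul] at h
    have h2 : (1 + φ j + φ k) * coordL p (2*j+1) (D (X p (2*k+2))) = 0 := by
      linear_combination h
    exact (mul_eq_zero.mp h2).resolve_left (hφs j hj k hk)
  have hDe_even : ∀ k ∈ Icc 1 (p-1), ∀ j ∈ Icc 1 (p-1), j ≠ k →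
      coordL p (2*j+2) (D (X p (2*k+2))) = 0 := by
    intro k hk j hj hne
    have h := congrArg (coordL p (2*j+2)) (rel3 k hk)
    rw [map_smul, map_add, coordL_mu_even hp φ hj, coordL_mu_even hp φ hj,
      CeXer hp φ hj hk, if_neg hne, CeX2l hp φ hj, smul_eq_mul] at h
    have h2 : (φ k - φ j) * coordL p (2*j+2) (D (X p (2*k+2))) = 0 := by linear_combination h
    exact (mul_eq_zero.mp h2).resolve_left (sub_ne_zero.mpr (hφd k hk j hj (Ne.symm hne)))
  -- relation from (X_{2k+1}, X_{2k+2})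
  have hn : ∀ k ∈ Icc 1 (p-1), coordL p (2*k+2) (D (X p (2*k+2)))
      = coordL p 1 (D (X p 1)) - coordL p (2*k+1) (D (X p (2*k+1))) := by
    intro k hk
    have rel4 := hD (X p (2*k+1)) (X p (2*k+2))
    rw [mu_Xo_Xe hp φ hk, map_smul] at rel4
    have h := congrArg (coordL p 1) rel4
    rw [map_smul, map_add, coordL_mu_one hp φ, coordL_mu_one hp φ, C1Xer hp hk,
      C1Xol hp hk, smul_eq_mul] at h
    linear_combination h
  -- the decomposition
  refine ⟨comb p (-(coordL p 1 (D (X p 2)))) (coordL p 1 (D (X p 1)))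
      (fun k => coordL p (2*k+1) (D (X p 2)) / φ k)
      (fun k => -(coordL p (2*k+2) (D (X p 2))) / (1 + φ k)),
    (fun k => coordL p (2*k+1) (D (X p (2*k+1))) + coordL p 1 (D (X p 1)) * φ k), ?_⟩
  refine Module.Basis.ext (Pi.basisFun ℂ (Fin (2*p))) (fun i => ?_)
  have hXi : (Pi.basisFun ℂ (Fin (2*p))) i = X p ((i : ℕ)+1) := by
    funext i'
    rw [Pi.basisFun_apply]
    show (Pi.single i 1 : V p) i' = _
    rw [Pi.single_apply]
    show _ = if (i' : ℕ) + 1 = (i : ℕ) + 1 then (1:ℂ) else 0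
    by_cases h : i' = i
    · subst h; rw [if_pos rfl, if_pos rfl]
    · rw [if_neg h, if_neg (fun hc => h (Fin.ext (by omega)))]
  rw [hXi]
  simp only [LinearMap.add_apply, LinearMap.sum_apply, LinearMap.smul_apply]
  have hibd := i.isLt
  rcases Nat.lt_or_ge (i : ℕ) 2 with h2 | h2
  · rcases (show (i:ℕ) = 0 ∨ (i:ℕ) = 1 from by omega) with h0 | h0
    · -- basis vector X 1
      rw [show (i:ℕ)+1 = 1 from by omega]
      rw [Finset.sum_eq_zero (fun k hk => by rw [fDer_X1 hp hk, smul_zero]), add_zero]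
      rw [mu_v_X1 hp φ, comb_coord_two hp]
      conv_lhs => rw [recon hp (D (X p 1))]
      rw [comb_congr hp rfl hD1_2 hD1_odd hD1_even, comb_X1]
    · -- basis vector X 2
      rw [show (i:ℕ)+1 = 2 from by omega]
      rw [Finset.sum_eq_zero (fun k hk => by rw [fDer_X2 hp hk, smul_zero]), add_zero]
      rw [mu_eq hp φ]
      conv_lhs => rw [recon hp (D (X p 2))]
      refine comb_congr hp ?_ hbeta ?_ ?_
      · rw [C1X2r hp, comb_coord_one hp, neg_neg]
      · intro k hk
        rw [CoX2r hp φ hk, comb_coord_odd hp _ _ _ _ hk]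
        have h0 := hφ0 k hk
        field_simp
      · intro k hk
        rw [CeX2r hp φ hk, comb_coord_even hp _ _ _ _ hk]
        have h1 := hφ1 k hk
        field_simp
  · rcases Nat.even_or_odd (i : ℕ) with ⟨m, hm⟩ | ⟨m, hm⟩
    · -- basis vector X (2m+1)
      have hmK : m ∈ Icc 1 (p-1) := Finset.mem_Icc.mpr (by omega)
      rw [show (i:ℕ)+1 = 2*m+1 from by omega]
      rw [Finset.sum_eq_single_of_mem m hmK (fun j hj hjm => by
        rw [fDer_Xo hp hj hmK, if_neg hjm, smul_zero])]
      rw [fDer_Xo hp hmK hmK, if_pos rfl]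
      rw [mu_eq hp φ, ← comb_delta_odd hmK, comb_add hp]
      conv_lhs => rw [recon hp (D (X p (2*m+1)))]
      refine comb_congr hp ?_ ?_ ?_ ?_
      · rw [C1Xor hp hmK, comb_coord_even hp _ _ _ _ hmK, hDo_1 m hmK, add_zero]
      · rw [hDo_2 m hmK]; ring
      · intro j hj
        rw [CoXor hp φ hj hmK, comb_coord_two hp]
        by_cases h : j = m
        · subst h; rw [if_pos rfl, if_pos rfl]; ring
        · rw [if_neg h, if_neg h, add_zero]; exact hDo_odd m hmK j hj h
      · intro j hj
        rw [CeXor hp φ hj hmK, hDo_even m hmK j hj]; ring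
    · -- basis vector X (2m+2)
      have hmK : m ∈ Icc 1 (p-1) := Finset.mem_Icc.mpr (by omega)
      rw [show (i:ℕ)+1 = 2*m+2 from by omega]
      rw [Finset.sum_eq_single_of_mem m hmK (fun j hj hjm => by
        rw [fDer_Xe hp hj hmK, if_neg hjm, smul_zero])]
      rw [fDer_Xe hp hmK hmK, if_pos rfl, smul_neg, ← neg_smul]
      rw [mu_eq hp φ, ← comb_delta_even hmK, comb_add hp]
      conv_lhs => rw [recon hp (D (X p (2*m+2)))]
      refine comb_congr hp ?_ ?_ ?_ ?_
      · rw [C1Xer hp hmK, comb_coord_odd hp _ _ _ _ hmK, hDe_1 m hmK]; ring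
      · rw [hDe_2 m hmK]; ring
      · intro j hj
        rw [CoXer hp φ hj hmK, hDe_odd m hmK j hj]; ring
      · intro j hj
        rw [CeXer hp φ hj hmK, comb_coord_two hp]
        by_cases h : j = m
        · subst h; rw [if_pos rfl, if_pos rfl, hn j hj]; ring
        · rw [if_neg h, if_neg h, add_zero]; exact hDe_even m hmK j hj h

end


lemma lie_sum' {p : ℕ} {ι : Type*} (s : Finset ι) (f : ι → Module.End ℂ (V p))
    (x : Module.End ℂ (V p)) : ⁅x, ∑ i ∈ s, f i⁆ = ∑ i ∈ s, ⁅x, f i⁆ := by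
  simp only [Ring.lie_def, Finset.mul_sum, Finset.sum_mul, ← Finset.sum_sub_distrib]

lemma sum_lie' {p : ℕ} {ι : Type*} (s : Finset ι) (f : ι → Module.End ℂ (V p))
    (x : Module.End ℂ (V p)) : ⁅∑ i ∈ s, f i, x⁆ = ∑ i ∈ s, ⁅f i, x⁆ := by
  simp only [Ring.lie_def, Finset.mul_sum, Finset.sum_mul, ← Finset.sum_sub_distrib]


lemma lie_smul'' {p : ℕ} (t : ℂ) (A B : Module.End ℂ (V p)) : ⁅A, t • B⁆ = t • ⁅A, B⁆ := by
  simp only [Ring.lie_def, mul_smul_comm, smul_mul_assoc, smul_sub]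

lemma smul_lie'' {p : ℕ} (t : ℂ) (A B : Module.End ℂ (V p)) : ⁅t • A, B⁆ = t • ⁅A, B⁆ := by
  simp only [Ring.lie_def, mul_smul_comm, smul_mul_assoc, smul_sub]

end St8

set_option maxHeartbeats 2000000 in
set_option synthInstance.maxHeartbeats 1000000 in
/-- if `φ` avoids `Ω₁` then `Der(F_φ)` is 3-step solvable:
`D³(Der F_φ) = 0` and `D²(Der F_φ) ≠ 0`. -/
theorem stmt8 (p : ℕ) (hp : 2 ≤ p) (φ : ℕ → ℂ) (hΩ : AvoidsOmega1 p φ) :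
    LieAlgebra.derivedSeries ℂ ↥(derLie p φ) 3 = ⊥ ∧
    LieAlgebra.derivedSeries ℂ ↥(derLie p φ) 2 ≠ ⊥ := by
  classical
  -- every inner derivation is a derivation (Jacobi)
  have hder : ∀ w : V p, mu p φ w ∈ derLie p φ := fun w x y => St8.jacobi hp φ w x y
  -- classification of derivations
  have hclass : ∀ E : Module.End ℂ (V p), E ∈ derLie p φ →
      ∃ (w : V p) (c : ℕ → ℂ), E = mu p φ w + ∑ k ∈ Finset.Icc 1 (p-1), c k • fDer p k :=
    fun E hE => St8.classify hp φ hΩ E hE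
  -- brackets of derivations are inner derivations by vectors with vanishing 2nd coordinate
  have hbr : ∀ (E F : Module.End ℂ (V p)), E ∈ derLie p φ → F ∈ derLie p φ →
      ∃ W : V p, coordL p 2 W = 0 ∧ ⁅E, F⁆ = mu p φ W := by
    intro E F hE hF
    obtain ⟨w, c, rfl⟩ := hclass E hE
    obtain ⟨w', c', rfl⟩ := hclass F hF
    refine ⟨mu p φ w w' + ∑ k ∈ Finset.Icc 1 (p-1), c k • fDer p k w'
      - ∑ k ∈ Finset.Icc 1 (p-1), c' k • fDer p k w, ?_, ?_⟩
    · rw [map_sub, map_add, St8.coordL_mu_two hp φ, map_sum, map_sum,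
        Finset.sum_eq_zero (fun k hk => by
          rw [map_smul, St8.coordL_fder_two hp hk, smul_zero]),
        Finset.sum_eq_zero (fun k hk => by
          rw [map_smul, St8.coordL_fder_two hp hk, smul_zero])]
      ring
    · have h1 : ⁅mu p φ w, ∑ k ∈ Finset.Icc 1 (p-1), c' k • fDer p k⁆
          = -(∑ k ∈ Finset.Icc 1 (p-1), c' k • mu p φ (fDer p k w)) := by
        rw [St8.lie_sum', ← Finset.sum_neg_distrib]
        refine Finset.sum_congr rfl (fun k hk => ?_)
        rw [St8.lie_smul'', ← lie_skew, St8.lie_f_mu hp φ hk w, smul_neg]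
      have h2 : ⁅∑ k ∈ Finset.Icc 1 (p-1), c k • fDer p k, mu p φ w'⁆
          = ∑ k ∈ Finset.Icc 1 (p-1), c k • mu p φ (fDer p k w') := by
        rw [St8.sum_lie']
        refine Finset.sum_congr rfl (fun k hk => ?_)
        rw [St8.smul_lie'', St8.lie_f_mu hp φ hk w']
      have h3 : ⁅∑ j ∈ Finset.Icc 1 (p-1), c j • fDer p j,
          ∑ k ∈ Finset.Icc 1 (p-1), c' k • fDer p k⁆ = 0 := by
        rw [St8.sum_lie']
        refine Finset.sum_eq_zero (fun j hj => ?_)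
        rw [St8.smul_lie'', St8.lie_sum',
          Finset.sum_eq_zero (fun k hk => by
            rw [St8.lie_smul'', St8.lie_f_f hp hj hk, smul_zero]),
          smul_zero]
      rw [lie_add, add_lie, add_lie, St8.lie_mu_mu hp φ w w', h1, h2, h3, add_zero,
        map_sub, map_add, map_sum, map_sum]
      simp only [map_smul]
      abel
  -- brackets with the inner derivation by X 1
  have hadX1 : ∀ (E : Module.End ℂ (V p)), E ∈ derLie p φ → ∀ d : ℂ,
      ∃ d' : ℂ, ⁅E, d • mu p φ (X p 1)⁆ = d' • mu p φ (X p 1) := by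
    intro E hE d
    obtain ⟨w, c, rfl⟩ := hclass E hE
    refine ⟨d * coordL p 2 w, ?_⟩
    have h1 : ⁅mu p φ w, mu p φ (X p 1)⁆ = coordL p 2 w • mu p φ (X p 1) := by
      rw [St8.lie_mu_mu hp φ, St8.mu_v_X1 hp φ w, map_smul]
    have h2 : ⁅∑ k ∈ Finset.Icc 1 (p-1), c k • fDer p k, mu p φ (X p 1)⁆ = 0 := by
      rw [St8.sum_lie']
      refine Finset.sum_eq_zero (fun k hk => ?_)
      rw [St8.smul_lie'', St8.lie_f_mu hp φ hk, St8.fDer_X1 hp hk, map_zero, smul_zero]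
    rw [St8.lie_smul'', add_lie, h1, h2, add_zero, smul_smul]
  -- the two auxiliary Lie ideals
  let I1 : LieIdeal ℂ ↥(derLie p φ) :=
    { carrier := {E | ∃ W : V p, coordL p 2 W = 0
        ∧ (E : Module.End ℂ (V p)) = mu p φ W}
      add_mem' := by
        rintro E F ⟨W, hW, hEW⟩ ⟨W', hW', hFW⟩
        refine ⟨W + W', by rw [map_add, hW, hW', add_zero], ?_⟩
        show (E : Module.End ℂ (V p)) + F = _
        rw [hEW, hFW, map_add]
      zero_mem' := ⟨0, by simp, by simp⟩
      smul_mem' := by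
        rintro t E ⟨W, hW, hEW⟩
        refine ⟨t • W, by rw [map_smul, hW, smul_zero], ?_⟩
        show t • (E : Module.End ℂ (V p)) = _
        rw [hEW, map_smul]
      lie_mem := by
        intro x m _
        obtain ⟨W', hW', hB⟩ := hbr x.val m.val x.2 m.2
        exact ⟨W', hW', by rw [LieSubalgebra.coe_bracket]; exact hB⟩ }
  let I2 : LieIdeal ℂ ↥(derLie p φ) :=
    { carrier := {E | ∃ d : ℂ, (E : Module.End ℂ (V p)) = d • mu p φ (X p 1)}
      add_mem' := by
        rintro E F ⟨d, hE⟩ ⟨e, hF⟩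
        refine ⟨d + e, ?_⟩
        show (E : Module.End ℂ (V p)) + F = _
        rw [hE, hF, add_smul]
      zero_mem' := ⟨0, by simp⟩
      smul_mem' := by
        rintro t E ⟨d, hE⟩
        refine ⟨t * d, ?_⟩
        show t • (E : Module.End ℂ (V p)) = _
        rw [hE, smul_smul]
      lie_mem := by
        intro x m hm
        obtain ⟨d, hm'⟩ := hm
        obtain ⟨d', h⟩ := hadX1 x.val x.2 d
        exact ⟨d', by rw [LieSubalgebra.coe_bracket, hm']; exact h⟩ }
  -- derived series bounds
  have hds1 : LieAlgebra.derivedSeries ℂ ↥(derLie p φ) 1 ≤ I1 := by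
    rw [LieAlgebra.derivedSeries_def, LieAlgebra.derivedSeriesOfIdeal_succ,
      LieAlgebra.derivedSeriesOfIdeal_zero]
    refine (LieSubmodule.lie_le_iff _ _ _).mpr (fun x _ m _ => ?_)
    obtain ⟨W, hW, hB⟩ := hbr x.val m.val x.2 m.2
    exact ⟨W, hW, by rw [LieSubalgebra.coe_bracket]; exact hB⟩
  have hds2 : LieAlgebra.derivedSeries ℂ ↥(derLie p φ) 2 ≤ I2 := by
    have e2 : LieAlgebra.derivedSeries ℂ ↥(derLie p φ) 2
        = ⁅LieAlgebra.derivedSeries ℂ ↥(derLie p φ) 1,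
            LieAlgebra.derivedSeries ℂ ↥(derLie p φ) 1⁆ := by
      rw [LieAlgebra.derivedSeries_def, LieAlgebra.derivedSeries_def,
        LieAlgebra.derivedSeriesOfIdeal_succ]
    rw [e2]
    refine le_trans (LieSubmodule.mono_lie hds1 hds1)
      ((LieSubmodule.lie_le_iff _ _ _).mpr (fun x hx m hm => ?_))
    obtain ⟨W, hW, hxW⟩ := hx
    obtain ⟨W', hW', hmW⟩ := hm
    refine ⟨St8.C1 p W W', ?_⟩
    rw [LieSubalgebra.coe_bracket, hxW, hmW, St8.lie_mu_mu hp φ,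
      St8.mu_nil hp φ hW hW', map_smul]
  refine ⟨?_, ?_⟩
  · -- D³ = ⊥
    rw [eq_bot_iff]
    have e3 : LieAlgebra.derivedSeries ℂ ↥(derLie p φ) 3
        = ⁅LieAlgebra.derivedSeries ℂ ↥(derLie p φ) 2,
            LieAlgebra.derivedSeries ℂ ↥(derLie p φ) 2⁆ := by
      rw [LieAlgebra.derivedSeries_def, LieAlgebra.derivedSeries_def,
        LieAlgebra.derivedSeriesOfIdeal_succ]
    rw [e3]
    refine le_trans (LieSubmodule.mono_lie hds2 hds2)
      ((LieSubmodule.lie_le_iff _ _ _).mpr (fun x hx m hm => ?_))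
    obtain ⟨d, hx'⟩ := hx
    obtain ⟨e, hm'⟩ := hm
    refine (LieSubmodule.mem_bot _).mpr (Subtype.ext ?_)
    show ((⁅x, m⁆ : ↥(derLie p φ)) : Module.End ℂ (V p)) = 0
    rw [LieSubalgebra.coe_bracket, hx', hm', St8.smul_lie'', St8.lie_smul'', lie_self,
      smul_zero, smul_zero]
  · -- D² ≠ ⊥
    have h1K : (1:ℕ) ∈ Finset.Icc 1 (p-1) := Finset.mem_Icc.mpr ⟨le_refl 1, by omega⟩
    have hφ0 : φ 1 ≠ 0 := (hΩ 1 1 (le_refl 1) (by omega) (le_refl 1) (by omega)).2.2.2.1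
    have hφ1 : 1 + φ 1 ≠ 0 := fun hc =>
      (hΩ 1 1 (le_refl 1) (by omega) (le_refl 1) (by omega)).2.2.2.2.1 (by linear_combination hc)
    set A2 : ↥(derLie p φ) := ⟨mu p φ (X p 2), hder _⟩ with hA2
    set A3 : ↥(derLie p φ) := ⟨mu p φ (X p (2*1+1)), hder _⟩ with hA3
    set A4 : ↥(derLie p φ) := ⟨mu p φ (X p (2*1+2)), hder _⟩ with hA4
    have hg1 : (⁅A2, A3⁆ : ↥(derLie p φ)) ∈ LieAlgebra.derivedSeries ℂ ↥(derLie p φ) 1 := by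
      rw [LieAlgebra.derivedSeries_def, LieAlgebra.derivedSeriesOfIdeal_succ,
        LieAlgebra.derivedSeriesOfIdeal_zero]
      exact LieSubmodule.lie_mem_lie (LieSubmodule.mem_top _) (LieSubmodule.mem_top _)
    have hg2 : (⁅A2, A4⁆ : ↥(derLie p φ)) ∈ LieAlgebra.derivedSeries ℂ ↥(derLie p φ) 1 := by
      rw [LieAlgebra.derivedSeries_def, LieAlgebra.derivedSeriesOfIdeal_succ,
        LieAlgebra.derivedSeriesOfIdeal_zero]
      exact LieSubmodule.lie_mem_lie (LieSubmodule.mem_top _) (LieSubmodule.mem_top _)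
    have hg : (⁅⁅A2, A3⁆, ⁅A2, A4⁆⁆ : ↥(derLie p φ))
        ∈ LieAlgebra.derivedSeries ℂ ↥(derLie p φ) 2 := by
      have e2 : LieAlgebra.derivedSeries ℂ ↥(derLie p φ) 2
          = ⁅LieAlgebra.derivedSeries ℂ ↥(derLie p φ) 1,
              LieAlgebra.derivedSeries ℂ ↥(derLie p φ) 1⁆ := by
        rw [LieAlgebra.derivedSeries_def, LieAlgebra.derivedSeries_def,
          LieAlgebra.derivedSeriesOfIdeal_succ]
      rw [e2]
      exact LieSubmodule.lie_mem_lie hg1 hg2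
    have hval : ((⁅⁅A2, A3⁆, ⁅A2, A4⁆⁆ : ↥(derLie p φ)) : Module.End ℂ (V p))
        = (φ 1 * (1 + φ 1)) • mu p φ (X p 1) := by
      rw [LieSubalgebra.coe_bracket, LieSubalgebra.coe_bracket, LieSubalgebra.coe_bracket,
        hA2, hA3, hA4]
      show ⁅⁅mu p φ (X p 2), mu p φ (X p (2*1+1))⁆,
        ⁅mu p φ (X p 2), mu p φ (X p (2*1+2))⁆⁆ = _
      rw [St8.lie_mu_mu hp φ, St8.lie_mu_mu hp φ, St8.mu_X2_Xo hp φ h1K,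
        St8.mu_X2_Xe hp φ h1K, map_smul, map_smul, St8.smul_lie'', St8.lie_smul'',
        St8.lie_mu_mu hp φ, St8.mu_Xo_Xe hp φ h1K, map_smul, smul_smul, smul_smul]
      congr 1
      ring
    have hne0 : (⁅⁅A2, A3⁆, ⁅A2, A4⁆⁆ : ↥(derLie p φ)) ≠ 0 := by
      intro h0
      have hz : ((⁅⁅A2, A3⁆, ⁅A2, A4⁆⁆ : ↥(derLie p φ)) : Module.End ℂ (V p)) = 0 := by
        rw [h0]; rfl
      rw [hval] at hz
      have h3 := congrArg (fun T : Module.End ℂ (V p) => coordL p 1 (T (X p 2))) hz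
      simp only [LinearMap.smul_apply, LinearMap.zero_apply, map_smul, map_zero] at h3
      rw [St8.mu_X1_X2 hp φ, map_smul, St8.coordL_X_eq p 1 (by omega) (by omega)] at h3
      simp only [smul_eq_mul] at h3
      exact mul_ne_zero hφ0 hφ1 (by linear_combination -h3)
    intro hbot
    rw [hbot] at hg
    exact hne0 ((LieSubmodule.mem_bot _).mp hg)
end
end
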